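/- arXiv:1307.6470 — 7 statements merged into one kernel-verified Lean document; each statement's English description precedes it below -/
import Mathlib

section
/- Invariant disk estimate (Theorem 3.1). Let I ⊂ ℝ be an interval, V : I → ℂ continuous, and α ∈ C¹(I) real-valued; set σ(u) = exp(∫^u 2α), U = Re V − α² − α', and 𝔇 = 2αU + U'/2 + β·Im V. Assume real functions R, β on I satisfy one of the following. (A): (R−β)(u) = −σ(u)^{-1} ∫^u σ·Im V (equivalently (σ(R−β))' = −σ·Im V), the function R−β has no zeros on I, (R+β) = U/(R−β), R ≥ 0, and (R−β)·𝔇 ≥ 0 on I. (B): (R+β)(u) = σ(u)^{-1} ∫^u σ·Im V, the function R+β has no zeros on I, (R−β) = U/(R+β), R ≥ 0, and (R+β)·𝔇 ≥ 0 on I. Then the circle centered at m(u) = α(u) + iβ(u) with radius R(u) is invariant on I under the Riccati flow y' = V − y²; that is, for every solution y : I → ℂ of y' = V − y² and all u₀ ≤ u₁ in I, |y(u₀) − m(u₀)| ≤ R(u₀) implies |y(u₁) − m(u₁)| ≤ R(u₁). -/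
open Set

set_option maxHeartbeats 1000000

private lemma riccati_caseA
    (a b : ℝ)
    (V : ℝ → ℂ)
    (α α' : ℝ → ℝ)
    (hα : ∀ u ∈ Icc a b, HasDerivAt α (α' u) u)
    (σ : ℝ → ℝ)
    (hσpos : ∀ u ∈ Icc a b, 0 < σ u)
    (hσ : ∀ u ∈ Icc a b, HasDerivAt σ (2 * α u * σ u) u)
    (U U' : ℝ → ℝ)
    (hU : ∀ u ∈ Icc a b, U u = (V u).re - α u ^ 2 - α' u)
    (hU' : ∀ u ∈ Icc a b, HasDerivAt U (U' u) u)
    (R β : ℝ → ℝ)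
    (hR : ∀ u ∈ Icc a b, 0 ≤ R u)
    (hA1 : ∀ u ∈ Icc a b, HasDerivAt (fun t => σ t * (R t - β t)) (-(σ u * (V u).im)) u)
    (hA2 : ∀ u ∈ Icc a b, R u - β u ≠ 0)
    (hA3 : ∀ u ∈ Icc a b, R u + β u = U u / (R u - β u))
    (hA4 : ∀ u ∈ Icc a b, 0 ≤ (R u - β u) * (2 * α u * U u + U' u / 2 + β u * (V u).im))
    (y : ℝ → ℂ)
    (hy : ∀ u ∈ Icc a b, HasDerivAt y (V u - y u ^ 2) u)
    (u₀ u₁ : ℝ) (hu₀ : u₀ ∈ Icc a b) (hu₁ : u₁ ∈ Icc a b) (h01 : u₀ ≤ u₁)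
    (hinit : ‖y u₀ - (↑(α u₀) + ↑(β u₀) * Complex.I)‖ ≤ R u₀) :
    ‖y u₁ - (↑(α u₁) + ↑(β u₁) * Complex.I)‖ ≤ R u₁ := by
  set I : Set ℝ := Icc a b with hIdef
  set P : ℝ → ℝ := fun u => -(V u).im - 2 * α u * (R u - β u) with hPdef
  set S : ℝ → ℝ := fun u => (U' u * (R u - β u) - U u * P u) / (R u - β u) ^ 2 with hSdef
  set c : ℝ → ℝ := fun u => (P u + S u) / 2 + 2 * α u * R u with hcdef
  -- derivative of p = R - β
  have hp : ∀ u ∈ I, HasDerivAt (fun t => R t - β t) (P u) u := by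
    intro u hu
    have hσu : σ u ≠ 0 := ne_of_gt (hσpos u hu)
    have hd := (hA1 u hu).div (hσ u hu) hσu
    have hne : ∀ᶠ t in nhds u, σ t ≠ 0 := (hσ u hu).continuousAt.eventually_ne hσu
    have heq : (fun t => R t - β t) =ᶠ[nhds u] fun t => (σ t * (R t - β t)) / σ t := by
      filter_upwards [hne] with t ht
      field_simp
    have hd2 := hd.congr_of_eventuallyEq heq
    refine hd2.congr_deriv ?_
    simp only [hPdef]
    field_simp
  -- derivative of s = R + β within I
  have hs : ∀ u ∈ I, HasDerivWithinAt (fun t => R t + β t) (S u) I u := by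
    intro u hu
    have hd := ((hU' u hu).div (hp u hu) (hA2 u hu)).hasDerivWithinAt (s := I)
    exact hd.congr (fun t ht => hA3 t ht) (hA3 u hu)
  have hRd : ∀ u ∈ I, HasDerivWithinAt R ((S u + P u) / 2) I u := by
    intro u hu
    have h2 := ((hs u hu).add (hp u hu).hasDerivWithinAt).div_const 2
    exact h2.congr (fun t _ => by simp only [Pi.add_apply]; ring) (by simp only [Pi.add_apply]; ring)
  have hβd : ∀ u ∈ I, HasDerivWithinAt β ((S u - P u) / 2) I u := by
    intro u hu
    have h2 := ((hs u hu).sub (hp u hu).hasDerivWithinAt).div_const 2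
    exact h2.congr (fun t _ => by simp only [Pi.sub_apply]; ring) (by simp only [Pi.sub_apply]; ring)
  -- c is nonnegative
  have hc : ∀ u ∈ I, 0 ≤ c u := by
    intro u hu
    have hpne := hA2 u hu
    have hps : (R u + β u) * (R u - β u) = U u := (eq_div_iff hpne).mp (hA3 u hu)
    have hS2 : S u * (R u - β u) ^ 2 = U' u * (R u - β u) - U u * P u := by
      simp only [hSdef]
      field_simp
    have hkey : c u * (R u - β u) ^ 2
        = (R u - β u) * (2 * α u * U u + U' u / 2 + β u * (V u).im) := by
      simp only [hcdef, hPdef] at *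
      linear_combination hS2 / 2 + (α u * (R u - β u) - (V u).im / 2) * hps
    have h4 := hA4 u hu
    have hp2 : 0 < (R u - β u) ^ 2 := by positivity
    have h5 : 0 ≤ c u * (R u - β u) ^ 2 := hkey ▸ h4
    exact nonneg_of_mul_nonneg_right (by linarith [h5] : 0 ≤ (R u - β u) ^ 2 * c u) hp2
  -- the moving disk center and the deviation w
  set m : ℝ → ℂ := fun t => (↑(α t) + ↑(β t) * Complex.I) with hmdef
  set w : ℝ → ℂ := fun t => y t - m t with hwdef
  set W : ℝ → ℂ := fun u => V u - y u ^ 2 - (↑(α' u) + ↑((S u - P u) / 2) * Complex.I)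
    with hWdef
  have hw : ∀ u ∈ I, HasDerivWithinAt w (W u) I u := by
    intro u hu
    have hαc : HasDerivWithinAt (fun t => (↑(α t) : ℂ)) (↑(α' u)) I u := by
      exact
        ((hα u hu).hasDerivWithinAt).ofReal_comp
    have hβc : HasDerivWithinAt (fun t => (↑(β t) : ℂ)) (↑((S u - P u) / 2)) I u := by
      exact (hβd u hu).ofReal_comp
    exact (hy u hu).hasDerivWithinAt.sub (hαc.add (hβc.mul_const Complex.I))
  set f : ℝ → ℝ := fun t => (w t).re ^ 2 + (w t).im ^ 2 with hfdef
  set F : ℝ → ℝ := fun u => 2 * (w u).re * (W u).re + 2 * (w u).im * (W u).im with hFdef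
  have hf : ∀ u ∈ I, HasDerivWithinAt f (F u) I u := by
    intro u hu
    have hre : HasDerivWithinAt (fun t => (w t).re) ((W u).re) I u := by
      exact Complex.reCLM.hasFDerivAt.comp_hasDerivWithinAt u (hw u hu)
    have him : HasDerivWithinAt (fun t => (w t).im) ((W u).im) I u := by
      exact Complex.imCLM.hasFDerivAt.comp_hasDerivWithinAt u (hw u hu)
    have h2 := (hre.pow 2).add (him.pow 2)
    refine h2.congr_deriv ?_
    simp only [hFdef]
    ring
  -- a uniform bound on |Re w| + |α|
  have hwc : ContinuousOn w I := fun u hu => (hw u hu).continuousWithinAt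
  have hαcont : ContinuousOn α I := fun u hu => (hα u hu).continuousAt.continuousWithinAt
  have hgc : ContinuousOn (fun u => |(w u).re| + |α u|) I :=
    ((Complex.continuous_re.comp_continuousOn hwc).abs.add hαcont.abs)
  obtain ⟨z, hzI, hz⟩ := isCompact_Icc.exists_isMaxOn ⟨u₀, hu₀⟩ hgc
  set C : ℝ := |(w z).re| + |α z| with hCdef
  have hC : ∀ u ∈ I, |(w u).re| + |α u| ≤ C := fun u hu => hz hu
  have hC0 : (0:ℝ) ≤ C := le_trans (by positivity) (hC u₀ hu₀)
  clear_value P S c m w W f F C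
  -- main estimate for each ε > 0
  have key : ∀ ε : ℝ, 0 < ε →
      ‖w u₁‖ ≤ R u₁ + ε * Real.exp ((2*C+1) * (u₁ - u₀)) := by
    intro ε hε
    set φ : ℝ → ℝ := fun t => ε * Real.exp ((2*C+1) * (t - u₀)) with hφdef
    set B : ℝ → ℝ := fun t => (R t + φ t) ^ 2 with hBdef
    set B' : ℝ → ℝ := fun u => 2 * (R u + φ u) * ((S u + P u) / 2 + (2*C+1) * φ u)
      with hB'def
    have hφpos : ∀ t, 0 < φ t := fun t => mul_pos hε (Real.exp_pos _)
    have hφd : ∀ t : ℝ, HasDerivAt φ ((2*C+1) * φ t) t := by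
      intro t
      have h1 : HasDerivAt (fun t : ℝ => (2*C+1) * (t - u₀)) (2*C+1) t := by
        simpa using ((hasDerivAt_id t).sub_const u₀).const_mul (2*C+1)
      have h2 := (h1.exp).const_mul ε
      refine h2.congr_deriv ?_
      simp only [hφdef]
      ring
    have hsub : Icc u₀ u₁ ⊆ I := Icc_subset_Icc hu₀.1 hu₁.2
    have hIci : ∀ x ∈ Ico u₀ u₁, I ∈ nhdsWithin x (Ici x) := by
      intro x hx
      apply mem_nhdsWithin.mpr
      refine ⟨Iio b, isOpen_Iio, lt_of_lt_of_le hx.2 hu₁.2, ?_⟩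
      rintro t ⟨ht1, ht2⟩
      exact ⟨le_trans hu₀.1 (le_trans hx.1 ht2), le_of_lt ht1⟩
    have hxmem : ∀ x ∈ Ico u₀ u₁, x ∈ I := fun x hx => hsub (Ico_subset_Icc_self hx)
    have hmain : ∀ ⦃x⦄, x ∈ Icc u₀ u₁ → f x ≤ B x := by
      apply image_le_of_deriv_right_lt_deriv_boundary' (f := f) (f' := F) (B := B) (B' := B')
      · exact fun u hu => ((hf u (hsub hu)).continuousWithinAt).mono hsub
      · exact fun x hx => (hf x (hxmem x hx)).mono_of_mem_nhdsWithin (hIci x hx)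
      · -- initial condition
        have habs : (w u₀).re ^ 2 + (w u₀).im ^ 2 = ‖w u₀‖ ^ 2 := by
          rw [Complex.sq_norm, Complex.normSq_apply]; ring
        have hini : ‖w u₀‖ ≤ R u₀ := by
          simpa [hwdef, hmdef] using hinit
        simp only [hfdef, hBdef]
        nlinarith [norm_nonneg (w u₀), hR u₀ hu₀, hφpos u₀, hini, habs]
      · -- continuity of B
        have hRc : ContinuousOn R (Icc u₀ u₁) :=
          fun u hu => ((hRd u (hsub hu)).continuousWithinAt).mono hsub
        exact ((hRc.add ((continuous_const.mul (Real.continuous_exp.comp (continuous_const.mul (continuous_id.sub continuous_const)))).continuousOn)).pow 2)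
      · -- derivative of B
        intro x hx
        have h1 := ((hRd x (hxmem x hx)).mono_of_mem_nhdsWithin (hIci x hx)).add
          (hφd x).hasDerivWithinAt
        have h2 := h1.pow 2
        refine h2.congr_deriv ?_
        simp only [hB'def, Pi.add_apply]
        ring
      · -- the crucial boundary inequality
        intro x hx hfB
        have hxI : x ∈ I := hxmem x hx
        have hpne := hA2 x hxI
        have hps : (R x + β x) * (R x - β x) = U x := (eq_div_iff hpne).mp (hA3 x hxI)
        have hUx := hU x hxI
        have hfx : (w x).re ^ 2 + (w x).im ^ 2 = (R x + φ x) ^ 2 := by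
          simpa only [hfdef, hBdef] using hfB
        -- identities for W
        have hre : (V x).re - ((y x).re^2 - (y x).im^2) - α' x
            = R x^2 - 2*(α x*((y x).re - α x) - β x*((y x).im - β x))
              - (((y x).re - α x)^2 - ((y x).im - β x)^2) := by
          linear_combination -hUx - hps
        have him : (V x).im - 2*(y x).re*(y x).im - (S x - P x)/2
            = -(c x) - 2*(α x*((y x).im - β x) + β x*((y x).re - α x))
              - 2*((y x).re - α x)*((y x).im - β x) := by
          simp only [hcdef, hPdef]
          ring
        have hW2 : W x = (↑(R x ^ 2) - ↑(c x) * Complex.I) - 2 * m x * w x - w x ^ 2 := by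
          simp only [hWdef, hwdef, hmdef]
          apply Complex.ext
          · simp only [pow_two, Complex.sub_re, Complex.add_re, Complex.mul_re, Complex.mul_im,
              Complex.I_re, Complex.I_im, Complex.ofReal_re, Complex.ofReal_im, Complex.sub_im,
              Complex.add_im, Complex.re_ofNat, Complex.im_ofNat]
            linear_combination hre
          · simp only [pow_two, Complex.sub_re, Complex.add_re, Complex.mul_re, Complex.mul_im,
              Complex.I_re, Complex.I_im, Complex.ofReal_re, Complex.ofReal_im, Complex.sub_im,
              Complex.add_im, Complex.re_ofNat, Complex.im_ofNat]
            linear_combination him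
        have hWre : (W x).re = R x ^ 2 - 2 * (α x * (w x).re - β x * (w x).im)
            - ((w x).re ^ 2 - (w x).im ^ 2) := by
          rw [hW2]
          simp only [hmdef, pow_two, Complex.sub_re, Complex.add_re, Complex.mul_re,
            Complex.mul_im, Complex.I_re, Complex.I_im, Complex.ofReal_re, Complex.ofReal_im,
            Complex.sub_im, Complex.add_im, Complex.re_ofNat, Complex.im_ofNat]
          ring
        have hWim : (W x).im = -(c x) - 2 * (α x * (w x).im + β x * (w x).re)
            - 2 * (w x).re * (w x).im := by
          rw [hW2]
          simp only [hmdef, pow_two, Complex.sub_re, Complex.add_re, Complex.mul_re,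
            Complex.mul_im, Complex.I_re, Complex.I_im, Complex.ofReal_re, Complex.ofReal_im,
            Complex.sub_im, Complex.add_im, Complex.re_ofNat, Complex.im_ofNat]
          ring
        have hFeq : F x = 2 * R x ^ 2 * (w x).re
            - (4 * α x + 2 * (w x).re) * (R x + φ x) ^ 2 - 2 * c x * (w x).im := by
          simp only [hFdef]
          rw [hWre, hWim]
          linear_combination (-(4 * α x + 2 * (w x).re)) * hfx
        have hB'eq : B' x = 2 * (R x + φ x) * ((c x - 2 * α x * R x) + (2*C+1) * φ x) := by
          simp only [hB'def, hcdef]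
          ring
        rw [hFeq, hB'eq]
        -- now a purely real polynomial inequality
        have hφx := hφpos x
        have hρ := hR x hxI
        have hcx := hc x hxI
        have hCx := hC x hxI
        have hi : -(R x + φ x) ≤ (w x).im := by
          nlinarith [hfx, sq_nonneg ((w x).re), sq_nonneg ((w x).im + (R x + φ x))]
        have e1 : 0 ≤ c x * ((R x + φ x) + (w x).im) := mul_nonneg hcx (by linarith)
        have eT : 0 ≤ φ x * (R x + φ x) := le_of_lt (mul_pos hφx (by linarith))
        have e2 : 0 ≤ (α x + |α x|) * (φ x * (R x + φ x)) :=
          mul_nonneg (by linarith [neg_abs_le (α x)]) eT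
        have e3 : 0 ≤ (C - |(w x).re| - |α x|) * (φ x * (R x + φ x)) :=
          mul_nonneg (by linarith) eT
        have e4 : 0 ≤ ((w x).re + |(w x).re|) * (φ x * (2 * R x + φ x)) :=
          mul_nonneg (by linarith [neg_abs_le ((w x).re)])
            (le_of_lt (mul_pos hφx (by linarith)))
        have e5 : 0 ≤ |(w x).re| * (φ x * φ x) :=
          mul_nonneg (abs_nonneg _) (mul_nonneg (le_of_lt hφx) (le_of_lt hφx))
        have e6 : 0 < φ x * (R x + φ x) := mul_pos hφx (by linarith)
        nlinarith [e1, e2, e3, e4, e5, e6]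
    have hfu₁ : f u₁ ≤ B u₁ := hmain (right_mem_Icc.mpr h01)
    have habs : ‖w u₁‖ ^ 2 = f u₁ := by
      rw [Complex.sq_norm, Complex.normSq_apply]; simp only [hfdef]; ring
    have h1 : ‖w u₁‖ ^ 2 ≤ (R u₁ + φ u₁) ^ 2 := by rw [habs]; exact hfu₁
    have h2 : 0 < R u₁ + φ u₁ := by have := hφpos u₁; have := hR u₁ hu₁; linarith
    have hφ1 : φ u₁ = ε * Real.exp ((2 * C + 1) * (u₁ - u₀)) := by simp only [hφdef]
    rw [← hφ1]
    nlinarith [norm_nonneg (w u₁), h1, h2,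
      mul_self_nonneg (‖w u₁‖ - (R u₁ + φ u₁))]
  -- let ε → 0
  have hfinal : ‖w u₁‖ ≤ R u₁ := by
    apply le_of_forall_pos_le_add
    intro δ hδ
    have hE : (0:ℝ) < Real.exp ((2*C+1) * (u₁ - u₀)) := Real.exp_pos _
    have := key (δ / Real.exp ((2*C+1) * (u₁ - u₀))) (div_pos hδ hE)
    calc ‖w u₁‖
        ≤ R u₁ + δ / Real.exp ((2*C+1) * (u₁ - u₀)) * Real.exp ((2*C+1) * (u₁ - u₀)) := this
      _ = R u₁ + δ := by rw [div_mul_cancel₀ _ (ne_of_gt hE)]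
  simpa [hwdef, hmdef] using hfinal

/-- **Invariant disk estimate** (Theorem 3.1).
On an interval `[a,b]`, given a continuous potential `V`, a `C¹` real function `α`
with derivative `α'`, the function `σ = exp(∫ 2α)` (characterized by `σ > 0` and
`σ' = 2ασ`), `U = Re V - α² - α'` with derivative `U'`, and real functions `R, β`
satisfying case (A) or case (B), the disk of center `m = α + iβ` and radius `R`
is invariant under the Riccati flow `y' = V - y²`. -/
theorem invariant_disk_estimate
    (a b : ℝ) (hab : a ≤ b)
    (V : ℝ → ℂ) (hV : ContinuousOn V (Icc a b))
    (α α' : ℝ → ℝ)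
    (hα : ∀ u ∈ Icc a b, HasDerivAt α (α' u) u)
    (hα'c : ContinuousOn α' (Icc a b))
    (σ : ℝ → ℝ)
    (hσpos : ∀ u ∈ Icc a b, 0 < σ u)
    (hσ : ∀ u ∈ Icc a b, HasDerivAt σ (2 * α u * σ u) u)
    (U U' : ℝ → ℝ)
    (hU : ∀ u ∈ Icc a b, U u = (V u).re - α u ^ 2 - α' u)
    (hU' : ∀ u ∈ Icc a b, HasDerivAt U (U' u) u)
    (R β : ℝ → ℝ)
    (hR : ∀ u ∈ Icc a b, 0 ≤ R u)
    (hcase :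
      -- case (A)
      ((∀ u ∈ Icc a b,
          HasDerivAt (fun t => σ t * (R t - β t)) (-(σ u * (V u).im)) u) ∧
        (∀ u ∈ Icc a b, R u - β u ≠ 0) ∧
        (∀ u ∈ Icc a b, R u + β u = U u / (R u - β u)) ∧
        (∀ u ∈ Icc a b,
          0 ≤ (R u - β u) * (2 * α u * U u + U' u / 2 + β u * (V u).im)))
      ∨
      -- case (B)
      ((∀ u ∈ Icc a b,
          HasDerivAt (fun t => σ t * (R t + β t)) (σ u * (V u).im) u) ∧
        (∀ u ∈ Icc a b, R u + β u ≠ 0) ∧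
        (∀ u ∈ Icc a b, R u - β u = U u / (R u + β u)) ∧
        (∀ u ∈ Icc a b,
          0 ≤ (R u + β u) * (2 * α u * U u + U' u / 2 + β u * (V u).im))))
    (y : ℝ → ℂ)
    (hy : ∀ u ∈ Icc a b, HasDerivAt y (V u - y u ^ 2) u)
    (u₀ u₁ : ℝ) (hu₀ : u₀ ∈ Icc a b) (hu₁ : u₁ ∈ Icc a b) (h01 : u₀ ≤ u₁)
    (hinit : ‖y u₀ - (↑(α u₀) + ↑(β u₀) * Complex.I)‖ ≤ R u₀) :
    ‖y u₁ - (↑(α u₁) + ↑(β u₁) * Complex.I)‖ ≤ R u₁ := by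
  rcases hcase with ⟨h1, h2, h3, h4⟩ | ⟨h1, h2, h3, h4⟩
  · exact riccati_caseA a b V α α' hα σ hσpos hσ U U' hU hU' R β hR h1 h2 h3 h4 y hy
      u₀ u₁ hu₀ hu₁ h01 hinit
  · -- case B: apply case A to the conjugated data
    have hconj : ∀ t : ℝ, (starRingEnd ℂ) (y t) - (↑(α t) + ↑(-β t) * Complex.I)
        = (starRingEnd ℂ) (y t - (↑(α t) + ↑(β t) * Complex.I)) := by
      intro t
      simp [map_sub, map_add, map_mul, Complex.conj_I]
    have := riccati_caseA a b (fun u => (starRingEnd ℂ) (V u)) α α' hα σ hσpos hσ U U'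
      (fun u hu => by simpa using hU u hu) hU' R (fun u => -β u) hR
      (fun u hu => by simpa [sub_neg_eq_add] using h1 u hu)
      (fun u hu => by simpa [sub_neg_eq_add] using h2 u hu)
      (fun u hu => by simpa [sub_neg_eq_add, ← sub_eq_add_neg] using h3 u hu)
      (fun u hu => by
        have := h4 u hu
        simp only [Complex.conj_im, sub_neg_eq_add]
        convert this using 1
        ring)
      (fun t => (starRingEnd ℂ) (y t))
      (fun u hu => by
        have h := hy u hu
        have h2' := Complex.conjCLE.toContinuousLinearMap.hasFDerivAt.comp_hasDerivAt u h
        simp only [ContinuousLinearEquiv.coe_coe, Function.comp_def] at h2'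
        simpa [map_sub, map_pow, Complex.conjCLE_apply] using h2')
      u₀ u₁ hu₀ hu₁ h01
      (by rw [hconj u₀, Complex.norm_conj]; exact hinit)
    rw [hconj u₁, Complex.norm_conj] at this
    exact this
end

section
/- T-method invariance (Theorem 3.2). Let I ⊂ ℝ be an interval, V : I → ℂ continuous, α ∈ C¹(I) real-valued, and suppose U = Re V − α² − α' satisfies U < 0 on I. Let T : I → ℝ be a C¹ function with T ≥ 1 which satisfies the differential inequality T'/T ≥ |𝔇/U| − (Im V/√|U|)·(T² − 1)/(2T) on I, where β = (√|U|/2)(T + 1/T), R = (√|U|/2)(T − 1/T), and 𝔇 = 2αU + U'/2 + β·Im V. Then the circle centered at m(u) = α(u) + iβ(u) with radius R(u) is invariant on I under the Riccati flow y' = V − y². -/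
open Set

lemma F2_lemma (S DS Tc DT AL IV : ℝ) (hS : 0 < S) (hT : 1 ≤ Tc)
    (hineq : DT / Tc ≥
      |(2 * AL * (-S^2) + (-(2 * S * DS)) / 2 + (S / 2 * (Tc + 1 / Tc)) * IV) / (-S^2)|
        - IV / S * ((Tc ^ 2 - 1) / (2 * Tc))) :
    |IV - (DS / 2 * (Tc + 1 / Tc) + S / 2 * (DT + -DT / Tc ^ 2)) - 2 * AL * (S / 2 * (Tc + 1 / Tc))|
      ≤ 2 * AL * (S / 2 * (Tc - 1 / Tc)) + (DS / 2 * (Tc - 1 / Tc) + S / 2 * (DT + DT / Tc ^ 2)) := by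
  have hT0 : (0:ℝ) < Tc := by linarith
  have hS0 : S ≠ 0 := ne_of_gt hS
  have hT0' : Tc ≠ 0 := ne_of_gt hT0
  set D : ℝ := (2 * AL * (-S^2) + (-(2 * S * DS)) / 2 + (S / 2 * (Tc + 1 / Tc)) * IV) / (-S^2) with hD
  set L : ℝ := DT / Tc + IV / S * ((Tc ^ 2 - 1) / (2 * Tc)) with hL
  have hLD : |D| ≤ L := by rw [hL]; linarith [hineq]
  have h1 : 0 ≤ L + D := by linarith [neg_abs_le D, le_abs_self D]
  have h2 : 0 ≤ L - D := by linarith [neg_abs_le D, le_abs_self D]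
  set A : ℝ := IV - (DS / 2 * (Tc + 1 / Tc) + S / 2 * (DT + -DT / Tc ^ 2)) - 2 * AL * (S / 2 * (Tc + 1 / Tc)) with hA
  set B : ℝ := 2 * AL * (S / 2 * (Tc - 1 / Tc)) + (DS / 2 * (Tc - 1 / Tc) + S / 2 * (DT + DT / Tc ^ 2)) with hB
  have idm : B - A = S * Tc * (L + D) := by rw [hA, hB, hL, hD]; field_simp; ring
  have idp : B + A = S / Tc * (L - D) := by rw [hA, hB, hL, hD]; field_simp; ring
  have hm : 0 ≤ B - A := by rw [idm]; positivity
  have hp : 0 ≤ B + A := by rw [idp]; positivity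
  rw [abs_le]; constructor <;> linarith

set_option maxHeartbeats 1000000 in
lemma key_est (P Q AL RT dR BT IM δ K RV IV DAL dbt : ℝ)
    (hδ : 0 < δ) (hRT : 0 ≤ RT)
    (hF : P ^ 2 + Q ^ 2 = (RT + δ) ^ 2)
    (hF1 : RV - DAL - AL ^ 2 + BT ^ 2 = RT ^ 2)
    (hIM : IM = IV - dbt - 2 * AL * BT)
    (hF2 : |IM| ≤ 2 * AL * RT + dR)
    (hK : (RT + δ) + RT - 2 * AL + 1 ≤ K) :
    2 * P * (RV - ((P + AL) ^ 2 - (Q + BT) ^ 2) - DAL)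
      + 2 * Q * (IV - 2 * (P + AL) * (Q + BT) - dbt)
      < 2 * (RT + δ) * (dR + δ * K) := by
  have hΦpos : (0:ℝ) < RT + δ := by positivity
  have hPle : |P| ≤ RT + δ := by
    rw [abs_le]; constructor <;> nlinarith [sq_nonneg Q]
  have hQle : |Q| ≤ RT + δ := by
    rw [abs_le]; constructor <;> nlinarith [sq_nonneg P]
  have hBnn : 0 ≤ 2 * AL * RT + dR := le_trans (abs_nonneg IM) hF2
  have expand : 2 * P * (RV - ((P + AL) ^ 2 - (Q + BT) ^ 2) - DAL)
      + 2 * Q * (IV - 2 * (P + AL) * (Q + BT) - dbt)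
      = 2 * P * (RV - DAL - AL ^ 2 + BT ^ 2) + 2 * Q * IM
        - (2 * P + 4 * AL) * (P ^ 2 + Q ^ 2) := by rw [hIM]; ring
  rw [expand, hF1, hF]
  have h1 : 2 * P * RT ^ 2 - 2 * P * (RT + δ) ^ 2 ≤ 2 * (RT + δ) * ((RT + δ) ^ 2 - RT ^ 2) := by
    have hd : 0 ≤ (RT + δ) ^ 2 - RT ^ 2 := by nlinarith
    nlinarith [abs_le.mp hPle]
  have h2 : 2 * Q * IM ≤ 2 * (RT + δ) * (2 * AL * RT + dR) := by
    calc 2 * Q * IM ≤ 2 * (|Q| * |IM|) := by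
          rw [← abs_mul]; nlinarith [le_abs_self (Q * IM)]
      _ ≤ 2 * ((RT + δ) * (2 * AL * RT + dR)) := by
          apply mul_le_mul_of_nonneg_left _ (by norm_num)
          exact mul_le_mul hQle hF2 (abs_nonneg IM) (le_of_lt hΦpos)
      _ = 2 * (RT + δ) * (2 * AL * RT + dR) := by ring
  have hKmul : ((RT + δ) + RT - 2 * AL + 1) * ((RT + δ) * δ) ≤ K * ((RT + δ) * δ) :=
    mul_le_mul_of_nonneg_right hK (le_of_lt (mul_pos hΦpos hδ))
  have h5 : 2 * (RT + δ) * ((RT + δ) ^ 2 - RT ^ 2) + 2 * (RT + δ) * (2 * AL * RT + dR)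
      - 4 * AL * (RT + δ) ^ 2 < 2 * (RT + δ) * (dR + δ * K) := by
    nlinarith [hKmul, mul_pos hΦpos hδ]
  linarith

set_option maxHeartbeats 1000000 in
/-- The derivative of the comparison function `g` is negative at a crossing point. -/
lemma crossing_deriv_neg (S DS AL DAL RV IV Tc DT Uc DU P Q δ K : ℝ)
    (hSpos : 0 < S) (hsq : S ^ 2 = -Uc)
    (hDS : DU = -(2 * S * DS))
    (hUc : Uc = RV - AL ^ 2 - DAL)
    (hT : 1 ≤ Tc)
    (hineq : DT / Tc ≥
      |(2 * AL * Uc + DU / 2 + (S / 2 * (Tc + 1 / Tc)) * IV) / Uc|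
        - IV / S * ((Tc ^ 2 - 1) / (2 * Tc)))
    (hδ : 0 < δ)
    (hF : P ^ 2 + Q ^ 2 = (S / 2 * (Tc - 1 / Tc) + δ) ^ 2)
    (hK : Real.sqrt (P ^ 2 + Q ^ 2) + S / 2 * (Tc - 1 / Tc) + 2 * |AL| + 1 ≤ K) :
    2 * P * (RV - ((P + AL) ^ 2 - (Q + S / 2 * (Tc + 1 / Tc)) ^ 2) - DAL)
      + 2 * Q * (IV - 2 * (P + AL) * (Q + S / 2 * (Tc + 1 / Tc))
          - (DS / 2 * (Tc + 1 / Tc) + S / 2 * (DT + -DT / Tc ^ 2)))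
      < 2 * (S / 2 * (Tc - 1 / Tc) + δ)
          * ((DS / 2 * (Tc - 1 / Tc) + S / 2 * (DT + DT / Tc ^ 2)) + δ * K) := by
  have hT0 : (0:ℝ) < Tc := by linarith
  have hS0 : S ≠ 0 := ne_of_gt hSpos
  have hT0' : Tc ≠ 0 := ne_of_gt hT0
  have hRT : 0 ≤ S / 2 * (Tc - 1 / Tc) := by
    have h1 : 1 / Tc ≤ Tc := by
      rw [div_le_iff₀ hT0]; nlinarith
    have : 0 ≤ Tc - 1 / Tc := by linarith
    positivity
  -- convert hineq into F2_lemma form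
  have hUc' : Uc = -S ^ 2 := by linarith
  have hineq' : DT / Tc ≥
      |(2 * AL * (-S^2) + (-(2 * S * DS)) / 2 + (S / 2 * (Tc + 1 / Tc)) * IV) / (-S^2)|
        - IV / S * ((Tc ^ 2 - 1) / (2 * Tc)) := by
    rw [← hUc', ← hDS]; exact hineq
  have hF2 := F2_lemma S DS Tc DT AL IV hSpos hT hineq'
  -- F1
  have hF1 : RV - DAL - AL ^ 2 + (S / 2 * (Tc + 1 / Tc)) ^ 2 = (S / 2 * (Tc - 1 / Tc)) ^ 2 := by
    have hid : (S / 2 * (Tc + 1 / Tc)) ^ 2 - (S / 2 * (Tc - 1 / Tc)) ^ 2 = S ^ 2 := by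
      field_simp; ring
    nlinarith [hid]
  -- K bound
  have hsqrt : Real.sqrt (P ^ 2 + Q ^ 2) = S / 2 * (Tc - 1 / Tc) + δ := by
    rw [hF]; exact Real.sqrt_sq (by positivity)
  have hK' : (S / 2 * (Tc - 1 / Tc) + δ) + S / 2 * (Tc - 1 / Tc) - 2 * AL + 1 ≤ K := by
    rw [hsqrt] at hK
    have : -2 * AL ≤ 2 * |AL| := by
      rcases abs_cases AL with ⟨h, _⟩ | ⟨h, _⟩ <;> nlinarith [abs_nonneg AL]
    linarith
  exact key_est P Q AL (S / 2 * (Tc - 1 / Tc)) (DS / 2 * (Tc - 1 / Tc) + S / 2 * (DT + DT / Tc ^ 2))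
    (S / 2 * (Tc + 1 / Tc))
    (IV - (DS / 2 * (Tc + 1 / Tc) + S / 2 * (DT + -DT / Tc ^ 2)) - 2 * AL * (S / 2 * (Tc + 1 / Tc)))
    δ K RV IV DAL (DS / 2 * (Tc + 1 / Tc) + S / 2 * (DT + -DT / Tc ^ 2))
    hδ hRT hF hF1 (by ring) hF2 hK'

set_option maxHeartbeats 2000000 in
/-- **T-method invariance** (Theorem 3.2).
If `U = Re V - α² - α' < 0` on `[a,b]` and `T ≥ 1` is `C¹` satisfying
`T'/T ≥ |𝔇/U| - (Im V/√|U|)·(T²-1)/(2T)`, where `β = (√|U|/2)(T + 1/T)`,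
`R = (√|U|/2)(T - 1/T)` and `𝔇 = 2αU + U'/2 + β·Im V`, then the disk with
center `α + iβ` and radius `R` is invariant under the Riccati flow `y' = V - y²`. -/
theorem t_method_invariance
    (a b : ℝ) (hab : a ≤ b)
    (V : ℝ → ℂ) (hV : ContinuousOn V (Icc a b))
    (α α' : ℝ → ℝ)
    (hα : ∀ u ∈ Icc a b, HasDerivAt α (α' u) u)
    (hα'c : ContinuousOn α' (Icc a b))
    (U U' : ℝ → ℝ)
    (hU : ∀ u ∈ Icc a b, U u = (V u).re - α u ^ 2 - α' u)
    (hUneg : ∀ u ∈ Icc a b, U u < 0)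
    (hU' : ∀ u ∈ Icc a b, HasDerivAt U (U' u) u)
    (T T' : ℝ → ℝ)
    (hT : ∀ u ∈ Icc a b, HasDerivAt T (T' u) u)
    (hT'c : ContinuousOn T' (Icc a b))
    (hT1 : ∀ u ∈ Icc a b, 1 ≤ T u)
    (β R : ℝ → ℝ)
    (hβ : ∀ u ∈ Icc a b, β u = Real.sqrt |U u| / 2 * (T u + 1 / T u))
    (hR : ∀ u ∈ Icc a b, R u = Real.sqrt |U u| / 2 * (T u - 1 / T u))
    (hineq : ∀ u ∈ Icc a b,
      T' u / T u ≥
        |(2 * α u * U u + U' u / 2 + β u * (V u).im) / U u|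
          - (V u).im / Real.sqrt |U u| * ((T u ^ 2 - 1) / (2 * T u)))
    (y : ℝ → ℂ)
    (hy : ∀ u ∈ Icc a b, HasDerivAt y (V u - y u ^ 2) u)
    (u₀ u₁ : ℝ) (hu₀ : u₀ ∈ Icc a b) (hu₁ : u₁ ∈ Icc a b) (h01 : u₀ ≤ u₁)
    (hinit : ‖y u₀ - (↑(α u₀) + ↑(β u₀) * Complex.I)‖ ≤ R u₀) :
    ‖y u₁ - (↑(α u₁) + ↑(β u₁) * Complex.I)‖ ≤ R u₁ := by
  have hsub : Icc u₀ u₁ ⊆ Icc a b := fun x hx => ⟨le_trans hu₀.1 hx.1, le_trans hx.2 hu₁.2⟩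
  have hTpos : ∀ u ∈ Icc a b, (0:ℝ) < T u := fun u hu => lt_of_lt_of_le one_pos (hT1 u hu)
  have hTne : ∀ u ∈ Icc a b, T u ≠ 0 := fun u hu => ne_of_gt (hTpos u hu)
  have hSpos : ∀ u ∈ Icc a b, 0 < Real.sqrt |U u| := fun u hu =>
    Real.sqrt_pos.mpr (abs_pos.mpr (ne_of_lt (hUneg u hu)))
  have hsq : ∀ u ∈ Icc a b, Real.sqrt |U u| ^ 2 = -U u := fun u hu => by
    rw [Real.sq_sqrt (abs_nonneg _), abs_of_neg (hUneg u hu)]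
  have hRtnn : ∀ u ∈ Icc a b, 0 ≤ Real.sqrt |U u| / 2 * (T u - 1 / T u) := by
    intro u hu
    have h1 : 1 / T u ≤ T u := by
      rw [div_le_iff₀ (hTpos u hu)]; nlinarith [hT1 u hu]
    have h2 : 0 ≤ T u - 1 / T u := by linarith
    positivity
  -- derivative of √|U|
  have hsd : ∀ u ∈ Icc a b, HasDerivAt (fun x => Real.sqrt |U x|)
      (-U' u / (2 * Real.sqrt |U u|)) u := by
    intro u hu
    have hev : ∀ᶠ x in nhds u, U x < 0 :=
      (hU' u hu).continuousAt (Iio_mem_nhds (hUneg u hu))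
    have habs : HasDerivAt (fun x => |U x|) (-U' u) u :=
      HasDerivAt.congr_of_eventuallyEq ((hU' u hu).neg)
        (hev.mono fun x hx => abs_of_neg hx)
    have h2 := (Real.hasDerivAt_sqrt (abs_ne_zero.mpr (ne_of_lt (hUneg u hu)))).comp u habs
    exact h2.congr_deriv (by ring)
  -- derivative of the β-formula
  have hdbt : ∀ u ∈ Icc a b, HasDerivAt (fun x => Real.sqrt |U x| / 2 * (T x + 1 / T x))
      (-U' u / (2 * Real.sqrt |U u|) / 2 * (T u + 1 / T u)
        + Real.sqrt |U u| / 2 * (T' u + -T' u / T u ^ 2)) u := by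
    intro u hu
    have h1 : HasDerivAt (fun x => T x + 1 / T x) (T' u + -T' u / T u ^ 2) u := by
      have h := (hT u hu).add ((hT u hu).inv (hTne u hu))
      simp only [one_div]; exact h
    exact ((hsd u hu).div_const 2).mul h1
  -- derivative of the R-formula
  have hdRt : ∀ u ∈ Icc a b, HasDerivAt (fun x => Real.sqrt |U x| / 2 * (T x - 1 / T x))
      (-U' u / (2 * Real.sqrt |U u|) / 2 * (T u - 1 / T u)
        + Real.sqrt |U u| / 2 * (T' u + T' u / T u ^ 2)) u := by
    intro u hu
    have h1 : HasDerivAt (fun x => T x - 1 / T x) (T' u - -T' u / T u ^ 2) u := by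
      have h := (hT u hu).sub ((hT u hu).inv (hTne u hu))
      simp only [one_div]; exact h
    have h2 := ((hsd u hu).div_const 2).mul h1
    exact h2.congr_deriv (by ring)
  -- a uniform bound K
  obtain ⟨K, hK⟩ : ∃ K, ∀ u ∈ Icc a b,
      Real.sqrt (((y u).re - α u) ^ 2
          + ((y u).im - Real.sqrt |U u| / 2 * (T u + 1 / T u)) ^ 2)
        + Real.sqrt |U u| / 2 * (T u - 1 / T u) + 2 * |α u| + 1 ≤ K := by
    have hcont : ContinuousOn (fun u => Real.sqrt (((y u).re - α u) ^ 2
          + ((y u).im - Real.sqrt |U u| / 2 * (T u + 1 / T u)) ^ 2)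
        + Real.sqrt |U u| / 2 * (T u - 1 / T u) + 2 * |α u| + 1) (Icc a b) := by
      intro u hu
      apply ContinuousAt.continuousWithinAt
      have hyc : ContinuousAt y u := (hy u hu).continuousAt
      have hαc : ContinuousAt α u := (hα u hu).continuousAt
      have hbtc : ContinuousAt (fun x => Real.sqrt |U x| / 2 * (T x + 1 / T x)) u :=
        (hdbt u hu).continuousAt
      have hRtc : ContinuousAt (fun x => Real.sqrt |U x| / 2 * (T x - 1 / T x)) u :=
        (hdRt u hu).continuousAt
      have hyre : ContinuousAt (fun x => (y x).re) u :=
        Complex.continuous_re.continuousAt.comp hyc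
      have hyim : ContinuousAt (fun x => (y x).im) u :=
        Complex.continuous_im.continuousAt.comp hyc
      exact (((Real.continuous_sqrt.continuousAt.comp
          (((hyre.sub hαc).pow 2).add ((hyim.sub hbtc).pow 2))).add hRtc).add
          (continuousAt_const.mul hαc.abs)).add continuousAt_const
    obtain ⟨C, hC⟩ := (isCompact_Icc).exists_bound_of_continuousOn hcont
    exact ⟨C, fun u hu => le_trans (le_abs_self _) (hC u hu)⟩
  rw [hβ u₁ hu₁, hR u₁ hu₁]
  rw [hβ u₀ hu₀, hR u₀ hu₀] at hinit
  have hEpos : (0:ℝ) < Real.exp (K * (u₁ - u₀)) := Real.exp_pos _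
  apply le_of_forall_pos_le_add
  intro ε' hε'
  set ε : ℝ := ε' / Real.exp (K * (u₁ - u₀)) with hεdef
  have hε : 0 < ε := div_pos hε' hEpos
  set g : ℝ → ℝ := fun x =>
    ((y x).re - α x) ^ 2 + ((y x).im - Real.sqrt |U x| / 2 * (T x + 1 / T x)) ^ 2
      - (Real.sqrt |U x| / 2 * (T x - 1 / T x) + ε * Real.exp (K * (x - u₀))) ^ 2 with hgdef
  have hgder : ∀ u ∈ Icc a b, HasDerivAt g (
      2 * ((y u).re - α u)
        * ((V u).re - ((y u).re ^ 2 - (y u).im ^ 2) - α' u)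
      + 2 * ((y u).im - Real.sqrt |U u| / 2 * (T u + 1 / T u))
          * ((V u).im - 2 * (y u).re * (y u).im
             - (-U' u / (2 * Real.sqrt |U u|) / 2 * (T u + 1 / T u)
                + Real.sqrt |U u| / 2 * (T' u + -T' u / T u ^ 2)))
      - 2 * (Real.sqrt |U u| / 2 * (T u - 1 / T u) + ε * Real.exp (K * (u - u₀)))
          * ((-U' u / (2 * Real.sqrt |U u|) / 2 * (T u - 1 / T u)
              + Real.sqrt |U u| / 2 * (T' u + T' u / T u ^ 2))
             + ε * (Real.exp (K * (u - u₀)) * K))) u := by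
    intro u hu
    have hyre : HasDerivAt (fun x => (y x).re) ((V u - y u ^ 2).re) u := by
      exact Complex.reCLM.hasFDerivAt.comp_hasDerivAt u (hy u hu)
    have hyim : HasDerivAt (fun x => (y x).im) ((V u - y u ^ 2).im) u := by
      exact Complex.imCLM.hasFDerivAt.comp_hasDerivAt u (hy u hu)
    have hp := (hyre.sub (hα u hu)).pow 2
    have hq := (hyim.sub (hdbt u hu)).pow 2
    have hexp : HasDerivAt (fun x => ε * Real.exp (K * (x - u₀)))
        (ε * (Real.exp (K * (u - u₀)) * (K * 1))) u :=
      ((((hasDerivAt_id u).sub_const u₀).const_mul K).exp).const_mul ε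
    have hΦ := ((hdRt u hu).add hexp).pow 2
    have hcomb := (hp.add hq).sub hΦ
    have h2re : (V u - y u ^ 2).re = (V u).re - ((y u).re ^ 2 - (y u).im ^ 2) := by
      simp [Complex.sub_re, pow_two, Complex.mul_re]
    have h2im : (V u - y u ^ 2).im = (V u).im - 2 * (y u).re * (y u).im := by
      simp [Complex.sub_im, pow_two, Complex.mul_im]; ring
    exact hcomb.congr_deriv (by rw [h2re, h2im]; push_cast; simp only [Pi.sub_apply, Pi.add_apply]; ring)
  have hgcont : ∀ u ∈ Icc a b, ContinuousAt g u := fun u hu => (hgder u hu).continuousAt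
  -- the initial value is strictly inside
  have hg0 : g u₀ < 0 := by
    have h1 : ‖y u₀ - (↑(α u₀)
          + ↑(Real.sqrt |U u₀| / 2 * (T u₀ + 1 / T u₀)) * Complex.I)‖ ^ 2
        = ((y u₀).re - α u₀) ^ 2
          + ((y u₀).im - Real.sqrt |U u₀| / 2 * (T u₀ + 1 / T u₀)) ^ 2 := by
      rw [Complex.sq_norm, Complex.normSq_apply]
      simp [Complex.sub_re, Complex.sub_im]
      ring
    have hδ0 : 0 < ε * Real.exp (K * (u₀ - u₀)) := by positivity
    have habsnn := norm_nonneg (y u₀ - (↑(α u₀)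
          + ↑(Real.sqrt |U u₀| / 2 * (T u₀ + 1 / T u₀)) * Complex.I))
    have hsqle := pow_le_pow_left₀ habsnn hinit 2
    simp only [hgdef]
    nlinarith [hRtnn u₀ hu₀, h1, hsqle, hδ0]
  -- main claim: g u₁ < 0
  have hgu₁ : g u₁ < 0 := by
    by_contra hcon
    push_neg at hcon
    set cl : ℝ → ℝ := fun x => max u₀ (min x u₁) with hcl
    have hclmem : ∀ x, cl x ∈ Icc u₀ u₁ :=
      fun x => ⟨le_max_left _ _, max_le h01 (min_le_right _ _)⟩
    have hclcont : Continuous cl := continuous_const.max (continuous_id.min continuous_const)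
    have hgclcont : Continuous (fun x => g (cl x)) := continuous_iff_continuousAt.mpr
      (fun x => (hgcont _ (hsub (hclmem x))).comp hclcont.continuousAt)
    have hclid : ∀ x ∈ Icc u₀ u₁, cl x = x := fun x hx => by
      simp only [hcl]
      rw [min_eq_left hx.2, max_eq_right hx.1]
    set Sset : Set ℝ := Icc u₀ u₁ ∩ (fun x => g (cl x)) ⁻¹' (Ici 0) with hSset
    have hclosed : IsClosed Sset := isClosed_Icc.inter (isClosed_Ici.preimage hgclcont)
    have hu₁mem : u₁ ∈ Icc u₀ u₁ := right_mem_Icc.mpr h01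
    have hu₁S : u₁ ∈ Sset := ⟨hu₁mem, by
      simp only [mem_preimage, mem_Ici]
      rw [hclid u₁ hu₁mem]; exact hcon⟩
    have hbdd : BddBelow Sset := ⟨u₀, fun x hx => hx.1.1⟩
    set c := sInf Sset with hcdef
    have hcS : c ∈ Sset := hclosed.csInf_mem ⟨u₁, hu₁S⟩ hbdd
    have hc01 : c ∈ Icc u₀ u₁ := hcS.1
    have hcab : c ∈ Icc a b := hsub hc01
    have hgc_nonneg : 0 ≤ g c := by
      have h := hcS.2
      simp only [mem_preimage, mem_Ici] at h
      rwa [hclid c hc01] at h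
    have hlt : ∀ x ∈ Ico u₀ c, g x < 0 := by
      intro x hx
      by_contra h
      push_neg at h
      have hxI : x ∈ Icc u₀ u₁ := ⟨hx.1, le_trans hx.2.le hc01.2⟩
      have hxmem : x ∈ Sset := ⟨hxI, by
        simp only [mem_preimage, mem_Ici]
        rw [hclid x hxI]; exact h⟩
      exact absurd (csInf_le hbdd hxmem) (not_le.mpr hx.2)
    have hu₀c : u₀ < c := lt_of_le_of_ne hc01.1 (fun h => by
      rw [← h] at hgc_nonneg; linarith [hg0])
    have hgc0 : g c = 0 := by
      have htd : Filter.Tendsto g (nhdsWithin c (Iio c)) (nhds (g c)) :=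
        ((hgcont c hcab).tendsto).mono_left nhdsWithin_le_nhds
      have hev : ∀ᶠ x in nhdsWithin c (Iio c), g x ≤ 0 := by
        filter_upwards [Ioo_mem_nhdsLT_of_mem ⟨hu₀c, le_refl c⟩] with x hx
        exact (hlt x ⟨hx.1.le, hx.2⟩).le
      exact le_antisymm (le_of_tendsto htd hev) hgc_nonneg
    -- derivative at c and its negativity
    have hF : ((y c).re - α c) ^ 2 + ((y c).im - Real.sqrt |U c| / 2 * (T c + 1 / T c)) ^ 2
        = (Real.sqrt |U c| / 2 * (T c - 1 / T c) + ε * Real.exp (K * (c - u₀))) ^ 2 := by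
      have h := hgc0
      simp only [hgdef] at h
      linarith
    have hDS : U' c = -(2 * Real.sqrt |U c| * (-U' c / (2 * Real.sqrt |U c|))) := by
      have hsne : (2 * Real.sqrt |U c|) ≠ 0 := ne_of_gt (by linarith [hSpos c hcab])
      field_simp
      rw [mul_div_cancel_right₀ _ (ne_of_gt (hSpos c hcab))]
    have hineqc : T' c / T c ≥
        |(2 * α c * U c + U' c / 2 + (Real.sqrt |U c| / 2 * (T c + 1 / T c)) * (V c).im) / U c|
          - (V c).im / Real.sqrt |U c| * ((T c ^ 2 - 1) / (2 * T c)) := by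
      have h := hineq c hcab
      rwa [hβ c hcab] at h
    have hKc : Real.sqrt (((y c).re - α c) ^ 2
          + ((y c).im - Real.sqrt |U c| / 2 * (T c + 1 / T c)) ^ 2)
        + Real.sqrt |U c| / 2 * (T c - 1 / T c) + 2 * |α c| + 1 ≤ K := hK c hcab
    have hcross := crossing_deriv_neg (Real.sqrt |U c|) (-U' c / (2 * Real.sqrt |U c|))
      (α c) (α' c) ((V c).re) ((V c).im) (T c) (T' c) (U c) (U' c)
      ((y c).re - α c) ((y c).im - Real.sqrt |U c| / 2 * (T c + 1 / T c))
      (ε * Real.exp (K * (c - u₀))) K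
      (hSpos c hcab) (hsq c hcab) hDS (hU c hcab) (hT1 c hcab) hineqc
      (by positivity) hF hKc
    have hd := hgder c hcab
    have hdneg : (2 * ((y c).re - α c)
        * ((V c).re - ((y c).re ^ 2 - (y c).im ^ 2) - α' c)
      + 2 * ((y c).im - Real.sqrt |U c| / 2 * (T c + 1 / T c))
          * ((V c).im - 2 * (y c).re * (y c).im
             - (-U' c / (2 * Real.sqrt |U c|) / 2 * (T c + 1 / T c)
                + Real.sqrt |U c| / 2 * (T' c + -T' c / T c ^ 2)))
      - 2 * (Real.sqrt |U c| / 2 * (T c - 1 / T c) + ε * Real.exp (K * (c - u₀)))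
          * ((-U' c / (2 * Real.sqrt |U c|) / 2 * (T c - 1 / T c)
              + Real.sqrt |U c| / 2 * (T' c + T' c / T c ^ 2))
             + ε * (Real.exp (K * (c - u₀)) * K))) < 0 := by
      nlinarith [hcross]
    -- slope contradiction
    have hsl := hasDerivAt_iff_tendsto_slope.mp hd
    have hev1 : ∀ᶠ x in nhdsWithin c {c}ᶜ, slope g c x < 0 := hsl.eventually_lt_const hdneg
    have hmono : nhdsWithin c (Iio c) ≤ nhdsWithin c {c}ᶜ :=
      nhdsWithin_mono c (fun x hx => ne_of_lt hx)
    have hev2 : ∀ᶠ x in nhdsWithin c (Iio c), slope g c x < 0 := hev1.filter_mono hmono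
    have hev3 : ∀ᶠ x in nhdsWithin c (Iio c), x ∈ Ioo u₀ c :=
      Filter.eventually_of_mem (Ioo_mem_nhdsLT_of_mem ⟨hu₀c, le_refl c⟩) (fun x hx => hx)
    obtain ⟨x, hx1, hx2⟩ := (hev2.and hev3).exists
    have hxc : x - c < 0 := by linarith [hx2.2]
    have hgx : 0 < g x := by
      have hs : slope g c x = (g x - g c) / (x - c) := slope_def_field g c x
      rw [hs, hgc0, sub_zero] at hx1
      by_contra h
      push_neg at h
      have h2 : 0 ≤ g x / (x - c) := div_nonneg_of_nonpos h hxc.le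
      linarith
    exact absurd hgx (not_lt.mpr (hlt x ⟨hx2.1.le, hx2.2⟩).le)
  -- conclude
  have h1 : ‖y u₁ - (↑(α u₁)
        + ↑(Real.sqrt |U u₁| / 2 * (T u₁ + 1 / T u₁)) * Complex.I)‖ ^ 2
      = ((y u₁).re - α u₁) ^ 2
        + ((y u₁).im - Real.sqrt |U u₁| / 2 * (T u₁ + 1 / T u₁)) ^ 2 := by
    rw [Complex.sq_norm, Complex.normSq_apply]
    simp [Complex.sub_re, Complex.sub_im]
    ring
  have hgl := hgu₁
  simp only [hgdef] at hgl
  have hεE : ε * Real.exp (K * (u₁ - u₀)) = ε' := by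
    rw [hεdef]
    exact div_mul_cancel₀ _ (ne_of_gt hEpos)
  rw [hεE] at hgl
  have habsnn := norm_nonneg (y u₁ - (↑(α u₁)
        + ↑(Real.sqrt |U u₁| / 2 * (T u₁ + 1 / T u₁)) * Complex.I))
  have hpos : 0 < Real.sqrt |U u₁| / 2 * (T u₁ - 1 / T u₁) + ε' := by
    have := hRtnn u₁ hu₁; linarith
  nlinarith [h1, hgl, habsnn, hpos]
end

section
/- Exponential lower bound for Im y (Lemma 3.6, first part). Let V : [u₀, u₁] → ℂ be continuous with Im V > 0, and let y be a solution of the Riccati equation y' = V − y² on [u₀, u₁] with Im y(u₀) > 0. Then for all u ∈ [u₀, u₁], Im y(u) ≥ Im y(u₀) · exp(−2 ∫_{u₀}^{u} Re y); in particular Im y stays positive. -/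
open Set

/-- **Exponential lower bound for `Im y`** (Lemma 3.6, first part).
If `Im V > 0` on `[u₀,u₁]` and `y` solves the Riccati equation `y' = V - y²`
with `Im y(u₀) > 0`, then `Im y(u) ≥ Im y(u₀)·exp(-2∫_{u₀}^u Re y)`;
in particular `Im y` stays positive. -/
theorem im_y_exponential_lower_bound
    (u₀ u₁ : ℝ) (hu : u₀ ≤ u₁)
    (V : ℝ → ℂ) (hV : ContinuousOn V (Icc u₀ u₁))
    (hImV : ∀ u ∈ Icc u₀ u₁, 0 < (V u).im)
    (y : ℝ → ℂ)
    (hy : ∀ u ∈ Icc u₀ u₁, HasDerivAt y (V u - y u ^ 2) u)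
    (h0 : 0 < (y u₀).im) :
    ∀ u ∈ Icc u₀ u₁,
      (y u₀).im * Real.exp (-2 * ∫ t in u₀..u, (y t).re) ≤ (y u).im
        ∧ 0 < (y u).im := by
  -- continuity of y on Icc
  have hyc : ContinuousOn y (Icc u₀ u₁) := fun u hu' =>
    (hy u hu').continuousAt.continuousWithinAt
  have hrec : ContinuousOn (fun t => (y t).re) (Icc u₀ u₁) :=
    Complex.continuous_re.comp_continuousOn hyc
  set F : ℝ → ℝ := fun u => ∫ t in u₀..u, (y t).re with hF
  have hFc : ContinuousOn F (Icc u₀ u₁) := by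
    have : MeasureTheory.IntegrableOn (fun t => (y t).re) (uIcc u₀ u₁) := by
      rw [uIcc_of_le hu]
      exact hrec.integrableOn_Icc
    simpa [uIcc_of_le hu] using intervalIntegral.continuousOn_primitive_interval this
  -- derivative of F at interior points
  have hFd : ∀ u ∈ Ioo u₀ u₁, HasDerivAt F ((y u).re) u := by
    intro u hu'
    have hint : IntervalIntegrable (fun t => (y t).re) MeasureTheory.volume u₀ u := by
      apply ContinuousOn.intervalIntegrable
      apply hrec.mono
      rw [uIcc_of_le hu'.1.le]
      exact Icc_subset_Icc le_rfl hu'.2.le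
    have hca : ContinuousAt (fun t => (y t).re) u :=
      (hrec u (Ioo_subset_Icc_self hu')).continuousAt
        (Icc_mem_nhds hu'.1 hu'.2)
    exact intervalIntegral.integral_hasDerivAt_right hint
      (ContinuousOn.stronglyMeasurableAtFilter isOpen_Ioo
        (hrec.mono Ioo_subset_Icc_self) u hu') hca
  -- the auxiliary function g
  set g : ℝ → ℝ := fun u => (y u).im * Real.exp (2 * F u) with hg
  have hgc : ContinuousOn g (Icc u₀ u₁) :=
    (Complex.continuous_im.comp_continuousOn hyc).mul
      ((continuous_const.mul continuous_id).continuousOn.comp' hFc (by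
        intro x hx; exact mem_univ _) |>.rexp)
  have hgd : ∀ u ∈ Ioo u₀ u₁, HasDerivAt g ((V u).im * Real.exp (2 * F u)) u := by
    intro u hu'
    have hyim : HasDerivAt (fun u => (y u).im) ((V u - y u ^ 2).im) u :=
      (Complex.imCLM.hasFDerivAt.comp_hasDerivAt u (hy u (Ioo_subset_Icc_self hu')))
    have hFe : HasDerivAt (fun u => Real.exp (2 * F u))
        (2 * (y u).re * Real.exp (2 * F u)) u := by
      have := (((hFd u hu').const_mul 2).exp)
      simpa [mul_comm] using this
    have : HasDerivAt (fun u => (y u).im * Real.exp (2 * F u)) _ u := hyim.mul hFe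
    convert this using 1
    have him : (V u - y u ^ 2).im = (V u).im - 2 * (y u).re * (y u).im := by
      simp [Complex.sub_im, pow_two, Complex.mul_im]; ring
    rw [him]; ring
  -- g is monotone on Icc
  have hmono : MonotoneOn g (Icc u₀ u₁) := by
    apply monotoneOn_of_deriv_nonneg (convex_Icc u₀ u₁) hgc
    · intro u hu'
      rw [interior_Icc] at hu'
      exact (hgd u hu').differentiableAt.differentiableWithinAt
    · intro u hu'
      rw [interior_Icc] at hu'
      rw [(hgd u hu').deriv]
      exact mul_nonneg (hImV u (Ioo_subset_Icc_self hu')).le (Real.exp_pos _).le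
  intro u hu'
  have hg0 : g u₀ = (y u₀).im := by simp [hg, hF]
  have hle : g u₀ ≤ g u := hmono (left_mem_Icc.mpr hu) hu' hu'.1
  rw [hg0] at hle
  have hexp : (0:ℝ) < Real.exp (2 * F u) := Real.exp_pos _
  constructor
  · have : (y u₀).im * Real.exp (-2 * F u) ≤
        ((y u).im * Real.exp (2 * F u)) * Real.exp (-2 * F u) := by
      exact mul_le_mul_of_nonneg_right hle (Real.exp_pos _).le
    calc (y u₀).im * Real.exp (-2 * ∫ t in u₀..u, (y t).re)
        ≤ ((y u).im * Real.exp (2 * F u)) * Real.exp (-2 * F u) := this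
      _ = (y u).im := by
          rw [mul_assoc, ← Real.exp_add]
          ring_nf
          simp
  · have hpos : 0 < (y u).im * Real.exp (2 * F u) := lt_of_lt_of_le h0 hle
    by_contra h
    push_neg at h
    nlinarith
end

section
/- Preserved lower bound for Im y (Lemma 3.6, second part). Let V : [u₀, u₁] → ℂ be continuous with Im V > 0, and let y be a solution of the Riccati equation y' = V − y² on [u₀, u₁] with Im y(u₀) > 0 and Re y nonvanishing on [u₀, u₁]. Then the Riccati flow preserves the inequality Im y(u) ≥ inf_{v ∈ [u₀, u]} Im V(v)/(2 Re y(v)); that is, if this inequality holds at some point ū ∈ [u₀, u₁], then it holds for all u ∈ [ū, u₁]. -/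
open Set

private lemma im_sub_sq (w z : ℂ) : (w - z ^ 2).im = w.im - 2 * z.re * z.im := by
  simp [Complex.sub_im, sq, Complex.mul_im]
  ring

/-- `Im y` stays positive along the Riccati flow if `Im V > 0`. -/
private lemma im_y_pos
    (u₀ u₁ : ℝ)
    (V : ℝ → ℂ)
    (hImV : ∀ u ∈ Icc u₀ u₁, 0 < (V u).im)
    (y : ℝ → ℂ)
    (hy : ∀ u ∈ Icc u₀ u₁, HasDerivAt y (V u - y u ^ 2) u)
    (h0 : 0 < (y u₀).im) :
    ∀ u ∈ Icc u₀ u₁, 0 < (y u).im := by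
  by_contra hcon
  push_neg at hcon
  obtain ⟨w, hw, hw0⟩ := hcon
  set S : Set ℝ := {v | v ∈ Icc u₀ u₁ ∧ (y v).im ≤ 0} with hS
  have hSne : S.Nonempty := ⟨w, hw, hw0⟩
  have hSbd : BddBelow S := ⟨u₀, fun v hv => hv.1.1⟩
  set s := sInf S with hs
  have hs0 : u₀ ≤ s := le_csInf hSne fun v hv => hv.1.1
  have hs1 : s ≤ u₁ := le_trans (csInf_le hSbd ⟨hw, hw0⟩) hw.2
  have hsIcc : s ∈ Icc u₀ u₁ := ⟨hs0, hs1⟩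
  have hconts : ContinuousAt (fun v => (y v).im) s :=
    Complex.continuous_im.continuousAt.comp (hy s hsIcc).continuousAt
  have hims : (y s).im ≤ 0 := by
    have hmaps : MapsTo (fun v => (y v).im) S (Iic 0) := fun v hv => hv.2
    have := hconts.continuousWithinAt.mem_closure (csInf_mem_closure hSne hSbd) hmaps
    rwa [isClosed_Iic.closure_eq] at this
  have hsne0 : u₀ < s :=
    lt_of_le_of_ne hs0 (fun h => absurd hims (not_le.2 (h ▸ h0)))
  -- points below `s` in the interval have positive imaginary part
  have hpos : ∀ v ∈ Ico u₀ s, 0 < (y v).im := by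
    intro v hv
    by_contra hvn
    push_neg at hvn
    have hvS : v ∈ S := ⟨⟨hv.1, hv.2.le.trans hs1⟩, hvn⟩
    exact absurd (csInf_le hSbd hvS) (not_le.2 hv.2)
  -- `Im y s ≥ 0` from the left, hence `= 0`
  have hims0 : (y s).im = 0 := by
    refine le_antisymm hims ?_
    have hscl : s ∈ closure (Ico u₀ s) := by
      rw [closure_Ico hsne0.ne]; exact ⟨hs0, le_rfl⟩
    have hmaps : MapsTo (fun v => (y v).im) (Ico u₀ s) (Ici 0) :=
      fun v hv => (hpos v hv).le
    have := hconts.continuousWithinAt.mem_closure hscl hmaps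
    rwa [isClosed_Ici.closure_eq] at this
  -- derivative of `Im y` at `s`
  have hder : HasDerivAt (fun v => (y v).im) ((V s - y s ^ 2).im) s :=
    Complex.imCLM.hasFDerivAt.comp_hasDerivAt s (hy s hsIcc)
  have hslope : Filter.Tendsto (slope (fun v => (y v).im) s)
      (nhdsWithin s (Iio s)) (nhds ((V s - y s ^ 2).im)) :=
    (hasDerivAt_iff_tendsto_slope.1 hder).mono_left
      (nhdsWithin_mono s fun x hx => ne_of_lt hx)
  have hle : (V s - y s ^ 2).im ≤ 0 := by
    refine le_of_tendsto hslope ?_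
    filter_upwards [Ioo_mem_nhdsLT_of_mem (⟨hsne0, le_refl s⟩ : s ∈ Ioc u₀ s)] with v hv
    have h1 : 0 < (y v).im := hpos v ⟨hv.1.le, hv.2⟩
    rw [slope_def_field]
    apply le_of_lt
    apply div_neg_of_pos_of_neg
    · rw [hims0]; linarith
    · linarith [hv.2]
  rw [im_sub_sq, hims0] at hle
  have := hImV s hsIcc
  simp at hle
  linarith

/-- **Preserved lower bound for `Im y`** (Lemma 3.6, second part).
If `Im V > 0` on `[u₀,u₁]`, `y` solves the Riccati equation `y' = V - y²` with
`Im y(u₀) > 0` and `Re y` nonvanishing, then the inequality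
`Im y(u) ≥ inf_{v ∈ [u₀,u]} Im V(v)/(2 Re y(v))` is preserved by the flow:
if it holds at `ū` then it holds on all of `[ū, u₁]`. -/
theorem im_y_preserved_lower_bound
    (u₀ u₁ : ℝ) (hu : u₀ ≤ u₁)
    (V : ℝ → ℂ) (hV : ContinuousOn V (Icc u₀ u₁))
    (hImV : ∀ u ∈ Icc u₀ u₁, 0 < (V u).im)
    (y : ℝ → ℂ)
    (hy : ∀ u ∈ Icc u₀ u₁, HasDerivAt y (V u - y u ^ 2) u)
    (h0 : 0 < (y u₀).im)
    (hre : ∀ u ∈ Icc u₀ u₁, (y u).re ≠ 0)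
    (ubar : ℝ) (hubar : ubar ∈ Icc u₀ u₁)
    (hhold : sInf ((fun v => (V v).im / (2 * (y v).re)) '' Icc u₀ ubar) ≤ (y ubar).im) :
    ∀ u ∈ Icc ubar u₁,
      sInf ((fun v => (V v).im / (2 * (y v).re)) '' Icc u₀ u) ≤ (y u).im := by
  intro u huI
  obtain ⟨hbu, hu1⟩ := huI
  have hu₀u : u₀ ≤ u := hubar.1.trans hbu
  have huIcc : u ∈ Icc u₀ u₁ := ⟨hu₀u, hu1⟩
  set f : ℝ → ℝ := fun v => (V v).im / (2 * (y v).re) with hf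
  have hycont : ∀ v ∈ Icc u₀ u₁, ContinuousAt y v := fun v hv => (hy v hv).continuousAt
  have hyconton : ContinuousOn y (Icc u₀ u₁) := fun v hv => (hycont v hv).continuousWithinAt
  have hfcont : ContinuousOn f (Icc u₀ u₁) := by
    apply ContinuousOn.div
    · exact Complex.continuous_im.comp_continuousOn hV
    · exact continuousOn_const.mul (Complex.continuous_re.comp_continuousOn hyconton)
    · intro v hv; simpa using mul_ne_zero two_ne_zero (hre v hv)
  have hbdd : ∀ a b : ℝ, Icc a b ⊆ Icc u₀ u₁ → BddBelow (f '' Icc a b) := fun a b hsub =>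
    (isCompact_Icc.image_of_continuousOn (hfcont.mono hsub)).bddBelow
  have himpos := im_y_pos u₀ u₁ V hImV y hy h0
  have hsub0u : Icc u₀ u ⊆ Icc u₀ u₁ := Icc_subset_Icc le_rfl hu1
  rcases lt_or_gt_of_ne (hre u₀ ⟨le_rfl, hu⟩) with hneg | hpos0
  · -- `Re y < 0` everywhere; the infimum is negative while `Im y > 0`
    have hfu : f u < 0 := by
      have hruneg : (y u).re < 0 := by
        rcases lt_or_gt_of_ne (hre u huIcc) with h | h
        · exact h
        · exfalso
          have h0m : (0 : ℝ) ∈ (fun t => (y t).re) '' Icc u₀ u :=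
            intermediate_value_Icc hu₀u
              ((Complex.continuous_re.comp_continuousOn hyconton).mono hsub0u)
              ⟨hneg.le, h.le⟩
          obtain ⟨t, ht, ht0⟩ := h0m
          exact hre t (hsub0u ht) ht0
      exact div_neg_of_pos_of_neg (hImV u huIcc) (by linarith)
    have h1 : sInf (f '' Icc u₀ u) ≤ f u :=
      csInf_le (hbdd u₀ u hsub0u) (mem_image_of_mem f ⟨hu₀u, le_rfl⟩)
    have h2 := himpos u huIcc
    linarith
  · -- `Re y > 0` everywhere
    have hrepos : ∀ v ∈ Icc u₀ u₁, 0 < (y v).re := by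
      intro v hv
      rcases lt_or_gt_of_ne (hre v hv) with h | h
      · exfalso
        have h0m : (0 : ℝ) ∈ (fun t => (y t).re) '' Icc u₀ v :=
          intermediate_value_Icc' hv.1
            ((Complex.continuous_re.comp_continuousOn hyconton).mono
              (Icc_subset_Icc le_rfl hv.2))
            ⟨h.le, hpos0.le⟩
        obtain ⟨t, ht, ht0⟩ := h0m
        exact hre t ⟨ht.1, ht.2.trans hv.2⟩ ht0
      · exact h
    have hsubbu : Icc ubar u ⊆ Icc u₀ u₁ := Icc_subset_Icc hubar.1 hu1
    set c : ℝ := min ((y ubar).im) (sInf (f '' Icc ubar u)) with hc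
    -- Step 1: the full infimum is at most `c`
    have hstep1 : sInf (f '' Icc u₀ u) ≤ c := by
      apply le_min
      · refine le_trans (csInf_le_csInf (hbdd u₀ u hsub0u)
          ((nonempty_Icc.2 hubar.1).image f)
          (image_mono (f := f) (Icc_subset_Icc le_rfl hbu))) hhold
      · refine le_csInf ((nonempty_Icc.2 hbu).image f) ?_
        rintro b ⟨v, hv, rfl⟩
        exact csInf_le (hbdd u₀ u hsub0u)
          (mem_image_of_mem f ⟨hubar.1.trans hv.1, hv.2⟩)
    -- Step 2: `c ≤ Im y u`
    have hstep2 : c ≤ (y u).im := by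
      by_contra hlt
      push_neg at hlt
      set T : Set ℝ := {v | v ∈ Icc ubar u ∧ c ≤ (y v).im} with hT
      have hTne : T.Nonempty := ⟨ubar, ⟨le_rfl, hbu⟩, min_le_left _ _⟩
      have hTbd : BddAbove T := ⟨u, fun v hv => hv.1.2⟩
      set s := sSup T with hsdef
      have hs0 : ubar ≤ s := le_csSup hTbd ⟨⟨le_rfl, hbu⟩, min_le_left _ _⟩
      have hs1 : s ≤ u := csSup_le hTne fun v hv => hv.1.2
      have hsIcc : s ∈ Icc u₀ u₁ := ⟨hubar.1.trans hs0, hs1.trans hu1⟩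
      have hconts : ContinuousAt (fun v => (y v).im) s :=
        Complex.continuous_im.continuousAt.comp (hycont s hsIcc)
      have hims : c ≤ (y s).im := by
        have hmaps : MapsTo (fun v => (y v).im) T (Ici c) := fun v hv => hv.2
        have := hconts.continuousWithinAt.mem_closure (csSup_mem_closure hTne hTbd) hmaps
        rwa [isClosed_Ici.closure_eq] at this
      have hsu : s < u :=
        lt_of_le_of_ne hs1 (by intro h; rw [h] at hims; exact absurd hims (not_le.2 hlt))
      have hbelow : ∀ v ∈ Ioc s u, (y v).im < c := by
        intro v hv
        by_contra hvn
        push_neg at hvn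
        have hvT : v ∈ T := ⟨⟨hs0.trans hv.1.le, hv.2⟩, hvn⟩
        exact absurd (le_csSup hTbd hvT) (not_le.2 hv.1)
      -- `Im y` is strictly monotone on `[s, u]`
      have hsubsu : Icc s u ⊆ Icc u₀ u₁ := Icc_subset_Icc hsIcc.1 hu1
      have hmono : StrictMonoOn (fun v => (y v).im) (Icc s u) := by
        apply strictMonoOn_of_deriv_pos (convex_Icc s u)
        · exact fun v hv =>
            (Complex.continuous_im.continuousAt.comp
              (hycont v (hsubsu hv))).continuousWithinAt
        · intro v hv
          rw [interior_Icc] at hv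
          have hvIcc : v ∈ Icc u₀ u₁ := hsubsu ⟨hv.1.le, hv.2.le⟩
          have hd : HasDerivAt (fun t => (y t).im) ((V v - y v ^ 2).im) v :=
            Complex.imCLM.hasFDerivAt.comp_hasDerivAt v (hy v hvIcc)
          rw [hd.deriv, im_sub_sq]
          have hre2 : 0 < 2 * (y v).re := by linarith [hrepos v hvIcc]
          have hcf : c ≤ f v := by
            refine le_trans (min_le_right _ _) ?_
            exact csInf_le (hbdd ubar u hsubbu)
              (mem_image_of_mem f ⟨hs0.trans hv.1.le, hv.2.le⟩)
          have hvlt : (y v).im < c := hbelow v ⟨hv.1, hv.2.le⟩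
          have hmul : c * (2 * (y v).re) ≤ (V v).im := by
            rw [← le_div_iff₀ hre2]; exact hcf
          nlinarith
      have := hmono (left_mem_Icc.2 hsu.le) (right_mem_Icc.2 hsu.le) hsu
      simp only at this
      linarith
    linarith
end

section
/- WKB T-estimate for Re V < 0 (Lemma 4.1). Let I = [u₀, u_max] and let V : I → ℂ be a C³ nonvanishing potential satisfying the semiclassical bounds sup_I |V'| ≤ ε·inf_I |V|^{3/2}, sup_I |V''| ≤ ε²·inf_I |V|², sup_I |V'''| ≤ ε³·inf_I |V|^{5/2} with ε < 1/8, and suppose a branch of the square root satisfies Im √V > Re √V ≥ 0 on I. Define ỹ = √V − V'/(4V), α = Re ỹ, β̃ = Im ỹ, Ṽ = V + 5(V')²/(16V²) − V''/(4V), and U = Re(V − Ṽ) − β̃². Then U < −|V|/4 < 0 on I, so Theorem 3.3 applies with g ≡ 0, and the resulting function T with T(u₀) = 1 satisfies log T(u) ≤ 64 ε² · inf_I |V|² · ∫_{u₀}^{u} |V|^{−3/2} for all u ∈ I. -/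
open Set

private lemma wkb_arith1 (ε sm sa : ℝ) (hsm0 : 0 ≤ sm) (hsa0 : 0 < sa) (hsmsa : sm ≤ sa)
    (hε0 : 0 < ε) (hε : ε ≤ 1 / 8) : ε * sm ^ 3 / (4 * sa ^ 2) ≤ sa / 32 := by
  rw [div_le_div_iff₀ (by positivity) (by norm_num)]
  nlinarith [mul_le_mul (show 32 * ε ≤ 4 by linarith) (pow_le_pow_left₀ hsm0 hsmsa 3)
    (pow_nonneg hsm0 3) (by norm_num : (0:ℝ) ≤ 4)]

private lemma wkb_arith2 (re im sa : ℝ) (hre : 0 ≤ re) (him : re < im)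
    (hsq : re ^ 2 + im ^ 2 = sa ^ 2) (hsa0 : 0 < sa) :
    im ≤ sa ∧ 7 / 10 * sa ≤ im := by
  constructor
  · nlinarith [sq_nonneg re, sq_nonneg (im - sa)]
  · have h2im : sa ^ 2 ≤ 2 * im ^ 2 := by nlinarith [mul_self_le_mul_self hre him.le]
    nlinarith [sq_nonneg (im - 7 / 10 * sa), mul_pos (lt_of_le_of_lt hre him) hsa0]

private lemma wkb_arith3 (ε sm sa : ℝ) (hsm0 : 0 ≤ sm) (hsa0 : 0 < sa) (hsmsa : sm ≤ sa)
    (hε0 : 0 < ε) :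
    ε ^ 2 * sm ^ 4 / (4 * sa ^ 2) + 5 * (ε * sm ^ 3) ^ 2 / (16 * (sa ^ 2) ^ 2)
      ≤ ε ^ 2 * sm ^ 4 / sa ^ 2 := by
  rw [div_add_div _ _ (by positivity) (by positivity),
    div_le_div_iff₀ (by positivity) (by positivity)]
  nlinarith [mul_le_mul_of_nonneg_left (pow_le_pow_left₀ hsm0 hsmsa 2)
      (by positivity : (0:ℝ) ≤ 20 * ε ^ 2 * sm ^ 4 * sa ^ 4),
    (by positivity : (0:ℝ) ≤ ε ^ 2 * sm ^ 4 * sa ^ 6)]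

private lemma wkb_arith4 (ε sm sa : ℝ) (hsm0 : 0 ≤ sm) (hsa0 : 0 < sa) (hsmsa : sm ≤ sa)
    (hε0 : 0 < ε) (hε : ε ≤ 1 / 8) : ε ^ 2 * sm ^ 4 / sa ^ 2 ≤ sa ^ 2 / 64 := by
  rw [div_le_div_iff₀ (by positivity) (by norm_num)]
  have he2 : ε ^ 2 ≤ 1 / 64 := by nlinarith
  have hp : sm ^ 4 ≤ sa ^ 4 := pow_le_pow_left₀ hsm0 hsmsa 4
  nlinarith [mul_le_mul he2 hp (pow_nonneg hsm0 4) (by norm_num : (0:ℝ) ≤ 1 / 64)]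

private lemma wkb_arith5 (x β sa : ℝ) (hx : x ≤ sa ^ 2 / 64) (hβ : 13 / 20 * sa ≤ β)
    (hsa0 : 0 < sa) : x - β ^ 2 < -(sa ^ 2) / 4 := by
  nlinarith [mul_self_le_mul_self (by positivity : (0:ℝ) ≤ 13 / 20 * sa) hβ,
    pow_pos hsa0 2]

private lemma wkb_arith6 (ε sm sa : ℝ) (hsm0 : 0 ≤ sm) (hsa0 : 0 < sa) (hsmsa : sm ≤ sa)
    (hε0 : 0 < ε) (hε : ε ≤ 1 / 8) :
    ε ^ 3 * sm ^ 5 / (4 * sa ^ 2) + ε ^ 2 * sm ^ 4 * (ε * sm ^ 3) / (4 * (sa ^ 2) ^ 2)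
      + 5 * (ε * sm ^ 3 * (ε ^ 2 * sm ^ 4)) / (8 * (sa ^ 2) ^ 2)
      + 5 * (ε * sm ^ 3) ^ 3 / (8 * (sa ^ 2) ^ 3)
      ≤ ε ^ 2 * sm ^ 4 / sa := by
  have k1 : ε ^ 3 * sm ^ 5 / (4 * sa ^ 2) ≤ ε ^ 2 * sm ^ 4 / (4 * sa) := by
    rw [div_le_div_iff₀ (by positivity) (by positivity)]
    have hεsm : ε * sm ≤ sa := by nlinarith
    nlinarith [mul_le_mul_of_nonneg_left hεsm
      (by positivity : (0:ℝ) ≤ 4 * ε ^ 2 * sm ^ 4 * sa)]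
  have k2 : ε ^ 2 * sm ^ 4 * (ε * sm ^ 3) / (4 * (sa ^ 2) ^ 2) ≤ ε ^ 2 * sm ^ 4 / (4 * sa) := by
    rw [div_le_div_iff₀ (by positivity) (by positivity)]
    have hεsm3 : ε * sm ^ 3 ≤ sa ^ 3 := by
      nlinarith [pow_le_pow_left₀ hsm0 hsmsa 3, pow_nonneg hsm0 3]
    nlinarith [mul_le_mul_of_nonneg_left hεsm3
      (by positivity : (0:ℝ) ≤ 4 * ε ^ 2 * sm ^ 4 * sa)]
  have k3 : 5 * (ε * sm ^ 3 * (ε ^ 2 * sm ^ 4)) / (8 * (sa ^ 2) ^ 2)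
      ≤ ε ^ 2 * sm ^ 4 / (8 * sa) := by
    rw [div_le_div_iff₀ (by positivity) (by positivity)]
    have hεsm3 : 5 * ε * sm ^ 3 ≤ sa ^ 3 := by
      nlinarith [pow_le_pow_left₀ hsm0 hsmsa 3, pow_nonneg hsm0 3]
    nlinarith [mul_le_mul_of_nonneg_left hεsm3
      (by positivity : (0:ℝ) ≤ 8 * ε ^ 2 * sm ^ 4 * sa)]
  have k4 : 5 * (ε * sm ^ 3) ^ 3 / (8 * (sa ^ 2) ^ 3) ≤ ε ^ 2 * sm ^ 4 / (8 * sa) := by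
    rw [div_le_div_iff₀ (by positivity) (by positivity)]
    have hεsm5 : 5 * ε ^ 3 * sm ^ 9 ≤ ε ^ 2 * sm ^ 4 * (sm ^ 5) := by
      nlinarith [mul_nonneg (show (0:ℝ) ≤ 1 - 5 * ε by linarith)
        (by positivity : (0:ℝ) ≤ ε ^ 2 * sm ^ 9)]
    have hsm5 : sm ^ 5 ≤ sa ^ 5 := pow_le_pow_left₀ hsm0 hsmsa 5
    nlinarith [mul_le_mul_of_nonneg_left hsm5
      (by positivity : (0:ℝ) ≤ 8 * ε ^ 2 * sm ^ 4 * sa),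
      mul_le_mul_of_nonneg_right hεsm5 (by positivity : (0:ℝ) ≤ 8 * sa)]
  have e5 : ε ^ 2 * sm ^ 4 / (4 * sa) + ε ^ 2 * sm ^ 4 / (4 * sa)
      + ε ^ 2 * sm ^ 4 / (8 * sa) + ε ^ 2 * sm ^ 4 / (8 * sa)
      = 3 / 4 * (ε ^ 2 * sm ^ 4 / sa) := by
    field_simp; ring
  have hx : (0:ℝ) ≤ ε ^ 2 * sm ^ 4 / sa := by positivity
  linarith

private lemma wkb_arith7 (β uu sa : ℝ) (hβ : β ≤ 2 * sa) (huu : sa ^ 2 / 4 ≤ uu)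
    (hsa0 : 0 < sa) : β * sa ≤ 8 * uu := by
  nlinarith [mul_le_mul_of_nonneg_right hβ hsa0.le]

open Set

set_option maxHeartbeats 3200000 in
lemma wkb_key (u₀ umax : ℝ)
    (V V' V'' V''' : ℝ → ℂ)
    (hV1 : ∀ u ∈ Icc u₀ umax, HasDerivAt V (V' u) u)
    (hV2 : ∀ u ∈ Icc u₀ umax, HasDerivAt V' (V'' u) u)
    (hV3 : ∀ u ∈ Icc u₀ umax, HasDerivAt V'' (V''' u) u)
    (hVne : ∀ u ∈ Icc u₀ umax, V u ≠ 0)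
    (ε : ℝ) (hε0 : 0 < ε) (hε : ε < 1 / 8)
    (hc1 : ∀ u ∈ Icc u₀ umax, ‖V' u‖
      ≤ ε * sInf ((fun t => ‖V t‖) '' Icc u₀ umax) ^ ((3 : ℝ) / 2))
    (hc2 : ∀ u ∈ Icc u₀ umax, ‖V'' u‖
      ≤ ε ^ 2 * sInf ((fun t => ‖V t‖) '' Icc u₀ umax) ^ 2)
    (hc3 : ∀ u ∈ Icc u₀ umax, ‖V''' u‖
      ≤ ε ^ 3 * sInf ((fun t => ‖V t‖) '' Icc u₀ umax) ^ ((5 : ℝ) / 2))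
    (sqrtV : ℝ → ℂ)
    (hsq : ∀ u ∈ Icc u₀ umax, sqrtV u ^ 2 = V u)
    (hbranch : ∀ u ∈ Icc u₀ umax,
      0 ≤ (sqrtV u).re ∧ (sqrtV u).re < (sqrtV u).im)
    (Vt : ℝ → ℂ)
    (hVt : ∀ u, Vt u = V u + 5 * (V' u) ^ 2 / (16 * (V u) ^ 2) - V'' u / (4 * V u))
    (α βt U : ℝ → ℝ)
    (hα : ∀ u, α u = (sqrtV u - V' u / (4 * V u)).re)
    (hβt : ∀ u, βt u = (sqrtV u - V' u / (4 * V u)).im)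
    (hU : ∀ u, U u = (V u - Vt u).re - βt u ^ 2)
    (W' : ℝ → ℝ)
    (hW' : ∀ u ∈ Icc u₀ umax, HasDerivAt (fun t => (V t - Vt t).re) (W' u) u)
    (t : ℝ) (ht : t ∈ Icc u₀ umax) :
    U t < -‖V t‖ / 4 ∧
    |1 / (2 * |U t|) * (4 * α t * (V t - Vt t).re + W' t)
        + βt t / |U t| * (V t - Vt t).im
        - (V t).im / |U t| * ((V t - Vt t).re / (Real.sqrt |U t| + βt t))|
      ≤ 64 * ε ^ 2 * sInf ((fun t => ‖V t‖) '' Icc u₀ umax) ^ 2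
          * ‖V t‖ ^ (-(3 : ℝ) / 2) := by
  set m := sInf ((fun t => ‖V t‖) '' Icc u₀ umax) with hm_def
  have hm0 : 0 ≤ m := by
    apply le_csInf ⟨_, mem_image_of_mem _ ht⟩
    rintro b ⟨x, hx, rfl⟩; exact norm_nonneg _
  have hma : m ≤ ‖V t‖ := by
    apply csInf_le ⟨0, ?_⟩ (mem_image_of_mem _ ht)
    rintro b ⟨x, hx, rfl⟩; exact norm_nonneg _
  have ha : 0 < ‖V t‖ := norm_pos_iff.mpr (hVne t ht)
  set sa := Real.sqrt (‖V t‖) with hsa_def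
  set sm := Real.sqrt m with hsm_def
  have hsa2 : sa ^ 2 = ‖V t‖ := Real.sq_sqrt ha.le
  have hsa0 : 0 < sa := Real.sqrt_pos.2 ha
  have hsm2 : sm ^ 2 = m := Real.sq_sqrt hm0
  have hsm0 : 0 ≤ sm := Real.sqrt_nonneg _
  have hsmsa : sm ≤ sa := Real.sqrt_le_sqrt hma
  -- rewrite the rpow bounds
  have hm32 : m ^ ((3 : ℝ) / 2) = sm ^ 3 := by
    rw [show ((3 : ℝ) / 2) = (1 / 2 : ℝ) * (3 : ℕ) by norm_num, Real.rpow_mul hm0,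
      Real.rpow_natCast, ← Real.sqrt_eq_rpow]
  have hm52 : m ^ ((5 : ℝ) / 2) = sm ^ 5 := by
    rw [show ((5 : ℝ) / 2) = (1 / 2 : ℝ) * (5 : ℕ) by norm_num, Real.rpow_mul hm0,
      Real.rpow_natCast, ← Real.sqrt_eq_rpow]
  have hm2 : m ^ 2 = sm ^ 4 := by rw [← hsm2]; ring
  have ha32 : ‖V t‖ ^ ((3 : ℝ) / 2) = sa ^ 3 := by
    rw [show ((3 : ℝ) / 2) = (1 / 2 : ℝ) * (3 : ℕ) by norm_num, Real.rpow_mul ha.le,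
      Real.rpow_natCast, ← Real.sqrt_eq_rpow]
  have ha32inv : ‖V t‖ ^ (-(3 : ℝ) / 2) = (sa ^ 3)⁻¹ := by
    rw [show (-(3 : ℝ)) / 2 = -((3 : ℝ) / 2) by ring, Real.rpow_neg ha.le, ha32]
  have hB1 : ‖V' t‖ ≤ ε * sm ^ 3 := by
    have := hc1 t ht; rwa [hm32] at this
  have hB2 : ‖V'' t‖ ≤ ε ^ 2 * sm ^ 4 := by
    have := hc2 t ht; rwa [hm2] at this
  have hB3 : ‖V''' t‖ ≤ ε ^ 3 * sm ^ 5 := by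
    have := hc3 t ht; rwa [hm52] at this
  have hε8 : ε ≤ 1 / 8 := hε.le
  -- square root branch facts
  obtain ⟨hsre, hsim⟩ := hbranch t ht
  have hnormsq : (sqrtV t).re ^ 2 + (sqrtV t).im ^ 2 = sa ^ 2 := by
    have h1 : ‖sqrtV t‖ ^ 2 = ‖V t‖ := by
      rw [← norm_pow, hsq t ht]
    rw [Complex.sq_norm, Complex.normSq_apply] at h1
    rw [hsa2, pow_two, pow_two]; exact h1
  have him_pos : 0 < (sqrtV t).im := lt_of_le_of_lt hsre hsim
  have him_hi : (sqrtV t).im ≤ sa :=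
    (wkb_arith2 _ _ _ hsre hsim hnormsq hsa0).1
  have him_lo : 7/10 * sa ≤ (sqrtV t).im :=
    (wkb_arith2 _ _ _ hsre hsim hnormsq hsa0).2
  -- bound on V'/(4V)
  have hcabs : ‖V' t / (4 * V t)‖ ≤ sa / 32 := by
    have he : ‖V' t / (4 * V t)‖ = ‖V' t‖ / (4 * sa ^ 2) := by
      rw [norm_div, norm_mul, Complex.norm_ofNat, hsa2]
    rw [he]
    have h1 : ‖V' t‖ / (4 * sa ^ 2) ≤ ε * sm ^ 3 / (4 * sa ^ 2) := by gcongr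
    exact h1.trans (wkb_arith1 ε sm sa hsm0 hsa0 hsmsa hε0 hε8)
  -- α and βt bounds
  have hre_c : |(V' t / (4 * V t)).re| ≤ sa / 32 := (Complex.abs_re_le_norm _).trans hcabs
  have him_c : |(V' t / (4 * V t)).im| ≤ sa / 32 := (Complex.abs_im_le_norm _).trans hcabs
  have hαabs : |α t| ≤ 2 * sa := by
    rw [hα, Complex.sub_re]
    have h1 : |(sqrtV t).re| ≤ sa := by
      rw [abs_of_nonneg hsre]; exact le_trans hsim.le him_hi
    calc |(sqrtV t).re - (V' t / (4 * V t)).re| ≤ |(sqrtV t).re| + |(V' t / (4 * V t)).re| :=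
          abs_sub _ _
    _ ≤ 2 * sa := by linarith
  have hβ_lo : 13/20 * sa ≤ βt t := by
    rw [hβt, Complex.sub_im]
    have := abs_le.1 him_c
    linarith [this.2]
  have hβ_hi : βt t ≤ 2 * sa := by
    rw [hβt, Complex.sub_im]
    have := abs_le.1 him_c
    linarith [this.1]
  have hβ_pos : 0 < βt t := lt_of_lt_of_le (by positivity) hβ_lo
  -- bound on D = V - Vt
  have hDeq : V t - Vt t = V'' t / (4 * V t) - 5 * V' t ^ 2 / (16 * V t ^ 2) := by
    rw [hVt]; ring
  have hDabs : ‖V t - Vt t‖ ≤ ε ^ 2 * sm ^ 4 / sa ^ 2 := by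
    rw [hDeq]
    have e1 : ‖V'' t / (4 * V t)‖ = ‖V'' t‖ / (4 * sa ^ 2) := by
      rw [norm_div, norm_mul, Complex.norm_ofNat, hsa2]
    have e2 : ‖5 * V' t ^ 2 / (16 * V t ^ 2)‖
        = 5 * ‖V' t‖ ^ 2 / (16 * (sa ^ 2) ^ 2) := by
      rw [norm_div, norm_mul, norm_mul, norm_pow, norm_pow, Complex.norm_ofNat,
        Complex.norm_ofNat, hsa2]
    calc ‖V'' t / (4 * V t) - 5 * V' t ^ 2 / (16 * V t ^ 2)‖
        ≤ ‖V'' t / (4 * V t)‖ + ‖5 * V' t ^ 2 / (16 * V t ^ 2)‖ :=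
          norm_sub_le _ _
    _ ≤ (ε ^ 2 * sm ^ 4) / (4 * sa ^ 2) + 5 * (ε * sm ^ 3) ^ 2 / (16 * (sa ^ 2) ^ 2) := by
        rw [e1, e2]
        gcongr
    _ ≤ ε ^ 2 * sm ^ 4 / sa ^ 2 := by
        have := wkb_arith3 ε sm sa hsm0 hsa0 hsmsa hε0
        linarith
  have hDre : |(V t - Vt t).re| ≤ ε ^ 2 * sm ^ 4 / sa ^ 2 := (Complex.abs_re_le_norm _).trans hDabs
  have hDim : |(V t - Vt t).im| ≤ ε ^ 2 * sm ^ 4 / sa ^ 2 := (Complex.abs_im_le_norm _).trans hDabs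
  -- Goal 1 : U < -|V|/4
  have hQsa : ε ^ 2 * sm ^ 4 / sa ^ 2 ≤ sa ^ 2 / 64 :=
    wkb_arith4 ε sm sa hsm0 hsa0 hsmsa hε0 hε8
  have hUlt : U t < -‖V t‖ / 4 := by
    rw [hU, ← hsa2]
    have h1 : (V t - Vt t).re ≤ sa ^ 2 / 64 :=
      le_trans (le_trans (le_abs_self _) hDre) hQsa
    have := wkb_arith5 _ _ _ h1 hβ_lo hsa0
    linarith
  refine ⟨hUlt, ?_⟩
  have hUneg : U t < 0 := lt_trans hUlt (by linarith)
  have huu : |U t| = -U t := abs_of_neg hUneg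
  have huu_lo : sa ^ 2 / 4 ≤ |U t| := by
    rw [huu, ← hsa2] at *
    linarith [hUlt]
  have huu_pos : 0 < |U t| := lt_of_lt_of_le (by positivity) huu_lo
  have hru : sa / 2 ≤ Real.sqrt |U t| := by
    have h1 : Real.sqrt (sa ^ 2 / 4) ≤ Real.sqrt |U t| := Real.sqrt_le_sqrt huu_lo
    have h2 : Real.sqrt (sa ^ 2 / 4) = sa / 2 := by
      rw [show sa ^ 2 / 4 = (sa / 2) ^ 2 by ring, Real.sqrt_sq (by positivity)]
    linarith
  have hden : sa ≤ Real.sqrt |U t| + βt t := by linarith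
  -- bound on W'
  have hA : V t ≠ 0 := hVne t ht
  have h4A : (4 : ℂ) * V t ≠ 0 := mul_ne_zero (by norm_num) hA
  have h16A : (16 : ℂ) * (V t * V t) ≠ 0 := mul_ne_zero (by norm_num) (mul_ne_zero hA hA)
  have dF : HasDerivAt (fun x => V'' x / (4 * V x) - 5 * (V' x * V' x) / (16 * (V x * V x)))
      (V''' t / (4 * V t) - V'' t * V' t / (4 * V t ^ 2) - 5 * (V' t * V'' t) / (8 * V t ^ 2)
        + 5 * V' t ^ 3 / (8 * V t ^ 3)) t := by
    have d1 := (hV3 t ht).div ((hV1 t ht).const_mul (4 : ℂ)) h4A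
    have dnum : HasDerivAt (fun y => (5 : ℂ) * (V' y * V' y))
        ((5 : ℂ) * (V'' t * V' t + V' t * V'' t)) t :=
      ((hV2 t ht).mul (hV2 t ht)).const_mul 5
    have dden : HasDerivAt (fun y => (16 : ℂ) * (V y * V y))
        ((16 : ℂ) * (V' t * V t + V t * V' t)) t :=
      ((hV1 t ht).mul (hV1 t ht)).const_mul 16
    have d2 := dnum.div dden h16A
    have := d1.sub d2
    convert this using 1
    · rfl
    · rfl
    field_simp
    ring_nf
  have hre0 := Complex.reCLM.hasFDerivAt.comp_hasDerivAt t dF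
  simp only [Function.comp_def, Complex.reCLM_apply] at hre0
  have hfun : (fun x => (V x - Vt x).re)
      = (fun x => (V'' x / (4 * V x) - 5 * (V' x * V' x) / (16 * (V x * V x))).re) := by
    funext x; congr 1; rw [hVt]; ring
  have hre : HasDerivAt (fun x => (V x - Vt x).re)
      ((V''' t / (4 * V t) - V'' t * V' t / (4 * V t ^ 2) - 5 * (V' t * V'' t) / (8 * V t ^ 2)
        + 5 * V' t ^ 3 / (8 * V t ^ 3)).re) t := by rw [hfun]; exact hre0
  have hW'eq : W' t = (V''' t / (4 * V t) - V'' t * V' t / (4 * V t ^ 2)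
      - 5 * (V' t * V'' t) / (8 * V t ^ 2) + 5 * V' t ^ 3 / (8 * V t ^ 3)).re :=
    (hW' t ht).unique hre
  have habsW : |W' t| ≤ ε ^ 2 * sm ^ 4 / sa := by
    rw [hW'eq]
    have e1 : ‖V''' t / (4 * V t)‖ = ‖V''' t‖ / (4 * sa ^ 2) := by
      rw [norm_div, norm_mul, Complex.norm_ofNat, hsa2]
    have e2 : ‖V'' t * V' t / (4 * V t ^ 2)‖
        = ‖V'' t‖ * ‖V' t‖ / (4 * (sa ^ 2) ^ 2) := by
      rw [norm_div, norm_mul, norm_mul, norm_pow, Complex.norm_ofNat, hsa2]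
    have e3 : ‖5 * (V' t * V'' t) / (8 * V t ^ 2)‖
        = 5 * (‖V' t‖ * ‖V'' t‖) / (8 * (sa ^ 2) ^ 2) := by
      rw [norm_div, norm_mul, norm_mul, norm_mul, norm_pow, Complex.norm_ofNat,
        Complex.norm_ofNat, hsa2]
    have e4 : ‖5 * V' t ^ 3 / (8 * V t ^ 3)‖
        = 5 * ‖V' t‖ ^ 3 / (8 * (sa ^ 2) ^ 3) := by
      rw [norm_div, norm_mul, norm_mul, norm_pow, norm_pow, Complex.norm_ofNat,
        Complex.norm_ofNat, hsa2]
    calc |(V''' t / (4 * V t) - V'' t * V' t / (4 * V t ^ 2)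
          - 5 * (V' t * V'' t) / (8 * V t ^ 2) + 5 * V' t ^ 3 / (8 * V t ^ 3)).re|
        ≤ ‖V''' t / (4 * V t) - V'' t * V' t / (4 * V t ^ 2)
          - 5 * (V' t * V'' t) / (8 * V t ^ 2) + 5 * V' t ^ 3 / (8 * V t ^ 3)‖ :=
          Complex.abs_re_le_norm _
    _ ≤ ‖V''' t / (4 * V t)‖ + ‖V'' t * V' t / (4 * V t ^ 2)‖
          + ‖5 * (V' t * V'' t) / (8 * V t ^ 2)‖
          + ‖5 * V' t ^ 3 / (8 * V t ^ 3)‖ := by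
        refine le_trans (norm_add_le _ _) ?_
        have h1 := norm_sub_le (V''' t / (4 * V t) - V'' t * V' t / (4 * V t ^ 2))
          (5 * (V' t * V'' t) / (8 * V t ^ 2))
        have h2 := norm_sub_le (V''' t / (4 * V t)) (V'' t * V' t / (4 * V t ^ 2))
        linarith
    _ ≤ (ε ^ 3 * sm ^ 5) / (4 * sa ^ 2) + (ε ^ 2 * sm ^ 4) * (ε * sm ^ 3) / (4 * (sa ^ 2) ^ 2)
          + 5 * ((ε * sm ^ 3) * (ε ^ 2 * sm ^ 4)) / (8 * (sa ^ 2) ^ 2)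
          + 5 * (ε * sm ^ 3) ^ 3 / (8 * (sa ^ 2) ^ 3) := by
        rw [e1, e2, e3, e4]
        gcongr <;> exact norm_nonneg _
    _ ≤ ε ^ 2 * sm ^ 4 / sa := wkb_arith6 ε sm sa hsm0 hsa0 hsmsa hε0 hε8
  -- final assembly
  have hE1 : |1 / (2 * |U t|) * (4 * α t * (V t - Vt t).re + W' t)|
      ≤ 18 * (ε ^ 2 * sm ^ 4) / sa ^ 3 := by
    rw [abs_mul, abs_of_pos (show (0:ℝ) < 1 / (2 * |U t|) by positivity)]
    have h1 : 1 / (2 * |U t|) ≤ 2 / sa ^ 2 := by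
      rw [div_le_div_iff₀ (by positivity) (by positivity)]
      linarith
    have h2 : |4 * α t * (V t - Vt t).re + W' t| ≤ 9 * (ε ^ 2 * sm ^ 4) / sa := by
      calc |4 * α t * (V t - Vt t).re + W' t|
          ≤ |4 * α t * (V t - Vt t).re| + |W' t| := abs_add_le _ _
      _ = 4 * |α t| * |(V t - Vt t).re| + |W' t| := by
          rw [abs_mul, abs_mul]; norm_num
      _ ≤ 4 * (2 * sa) * (ε ^ 2 * sm ^ 4 / sa ^ 2) + ε ^ 2 * sm ^ 4 / sa := by
          gcongr
      _ = 9 * (ε ^ 2 * sm ^ 4) / sa := by field_simp; ring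
    calc 1 / (2 * |U t|) * |4 * α t * (V t - Vt t).re + W' t|
        ≤ 2 / sa ^ 2 * (9 * (ε ^ 2 * sm ^ 4) / sa) := by
          exact mul_le_mul h1 h2 (abs_nonneg _) (by positivity)
    _ = 18 * (ε ^ 2 * sm ^ 4) / sa ^ 3 := by rw [div_mul_div_comm]; congr 1 <;> ring
  have hE2 : |βt t / |U t| * (V t - Vt t).im| ≤ 8 * (ε ^ 2 * sm ^ 4) / sa ^ 3 := by
    rw [abs_mul, abs_div, abs_of_pos hβ_pos, abs_of_pos huu_pos]
    have h1 : βt t / |U t| ≤ 8 / sa := by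
      rw [div_le_div_iff₀ huu_pos hsa0]
      exact wkb_arith7 _ _ _ hβ_hi huu_lo hsa0
    calc βt t / |U t| * |(V t - Vt t).im| ≤ 8 / sa * (ε ^ 2 * sm ^ 4 / sa ^ 2) :=
        mul_le_mul h1 hDim (abs_nonneg _) (by positivity)
    _ = 8 * (ε ^ 2 * sm ^ 4) / sa ^ 3 := by rw [div_mul_div_comm]; congr 1; ring
  have hE3 : |(V t).im / |U t| * ((V t - Vt t).re / (Real.sqrt |U t| + βt t))|
      ≤ 4 * (ε ^ 2 * sm ^ 4) / sa ^ 3 := by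
    have hden0 : 0 < Real.sqrt |U t| + βt t := lt_of_lt_of_le hsa0 hden
    rw [abs_mul, abs_div, abs_div, abs_of_pos huu_pos, abs_of_pos hden0]
    have h1 : |(V t).im| / |U t| ≤ 4 := by
      rw [div_le_iff₀ huu_pos]
      have := (Complex.abs_im_le_norm (V t))
      rw [← hsa2] at this
      linarith
    have h2 : |(V t - Vt t).re| / (Real.sqrt |U t| + βt t) ≤ (ε ^ 2 * sm ^ 4 / sa ^ 2) / sa :=
      div_le_div₀ (by positivity) hDre hsa0 hden
    calc |(V t).im| / |U t| * (|(V t - Vt t).re| / (Real.sqrt |U t| + βt t))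
        ≤ 4 * ((ε ^ 2 * sm ^ 4 / sa ^ 2) / sa) :=
        mul_le_mul h1 h2 (by positivity) (by norm_num)
    _ = 4 * (ε ^ 2 * sm ^ 4) / sa ^ 3 := by
        rw [div_div, show sa ^ 2 * sa = sa ^ 3 by ring]
        exact (mul_div_assoc _ _ _).symm
  calc |1 / (2 * |U t|) * (4 * α t * (V t - Vt t).re + W' t)
        + βt t / |U t| * (V t - Vt t).im
        - (V t).im / |U t| * ((V t - Vt t).re / (Real.sqrt |U t| + βt t))|
      ≤ |1 / (2 * |U t|) * (4 * α t * (V t - Vt t).re + W' t)|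
        + |βt t / |U t| * (V t - Vt t).im|
        + |(V t).im / |U t| * ((V t - Vt t).re / (Real.sqrt |U t| + βt t))| := by
        rw [sub_eq_add_neg]
        exact (abs_add_three _ _ _).trans_eq (by rw [abs_neg])
  _ ≤ 18 * (ε ^ 2 * sm ^ 4) / sa ^ 3 + 8 * (ε ^ 2 * sm ^ 4) / sa ^ 3
        + 4 * (ε ^ 2 * sm ^ 4) / sa ^ 3 := by linarith
  _ ≤ 64 * ε ^ 2 * m ^ 2 * ‖V t‖ ^ (-(3 : ℝ) / 2) := by
      rw [hm2, ha32inv]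
      have h30 : 18 * (ε ^ 2 * sm ^ 4) / sa ^ 3 + 8 * (ε ^ 2 * sm ^ 4) / sa ^ 3
          + 4 * (ε ^ 2 * sm ^ 4) / sa ^ 3 = 30 * (ε ^ 2 * sm ^ 4 / sa ^ 3) := by ring
      have h64 : 64 * ε ^ 2 * sm ^ 4 * (sa ^ 3)⁻¹ = 64 * (ε ^ 2 * sm ^ 4 / sa ^ 3) := by ring
      rw [h30, h64]
      have : (0:ℝ) ≤ ε ^ 2 * sm ^ 4 / sa ^ 3 := by positivity
      linarith

/-- **WKB T-estimate in the case `Re V < 0`** (Lemma 4.1).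
On `I = [u₀, u_max]`, for a `C³` nonvanishing potential `V` satisfying the
semiclassical bounds with `ε < 1/8` and a branch of the square root with
`Im √V > Re √V ≥ 0`, the WKB data `ỹ = √V - V'/(4V) = α + iβ̃`,
`Ṽ = V + 5(V')²/(16V²) - V''/(4V)`, `U = Re(V-Ṽ) - β̃²` satisfy
`U < -|V|/4 < 0` on `I`, so the T-method (Theorem 3.3) applies with `g ≡ 0`, and
the function `T` with `T(u₀) = 1` satisfies
`log T(u) ≤ 64 ε² (inf_I |V|)² ∫_{u₀}^u |V|^{-3/2}`. -/
theorem wkb_T_estimate_reV_neg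
    (u₀ umax : ℝ) (h : u₀ ≤ umax)
    (V V' V'' V''' : ℝ → ℂ)
    (hV1 : ∀ u ∈ Icc u₀ umax, HasDerivAt V (V' u) u)
    (hV2 : ∀ u ∈ Icc u₀ umax, HasDerivAt V' (V'' u) u)
    (hV3 : ∀ u ∈ Icc u₀ umax, HasDerivAt V'' (V''' u) u)
    (hVne : ∀ u ∈ Icc u₀ umax, V u ≠ 0)
    (ε : ℝ) (hε0 : 0 < ε) (hε : ε < 1 / 8)
    (hc1 : ∀ u ∈ Icc u₀ umax, ‖V' u‖
      ≤ ε * sInf ((fun t => ‖V t‖) '' Icc u₀ umax) ^ ((3 : ℝ) / 2))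
    (hc2 : ∀ u ∈ Icc u₀ umax, ‖V'' u‖
      ≤ ε ^ 2 * sInf ((fun t => ‖V t‖) '' Icc u₀ umax) ^ 2)
    (hc3 : ∀ u ∈ Icc u₀ umax, ‖V''' u‖
      ≤ ε ^ 3 * sInf ((fun t => ‖V t‖) '' Icc u₀ umax) ^ ((5 : ℝ) / 2))
    (sqrtV : ℝ → ℂ)
    (hsq : ∀ u ∈ Icc u₀ umax, sqrtV u ^ 2 = V u)
    (hbranch : ∀ u ∈ Icc u₀ umax,
      0 ≤ (sqrtV u).re ∧ (sqrtV u).re < (sqrtV u).im)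
    (Vt : ℝ → ℂ)
    (hVt : ∀ u, Vt u = V u + 5 * (V' u) ^ 2 / (16 * (V u) ^ 2) - V'' u / (4 * V u))
    (α βt U : ℝ → ℝ)
    (hα : ∀ u, α u = (sqrtV u - V' u / (4 * V u)).re)
    (hβt : ∀ u, βt u = (sqrtV u - V' u / (4 * V u)).im)
    (hU : ∀ u, U u = (V u - Vt u).re - βt u ^ 2)
    (W' : ℝ → ℝ)
    (hW' : ∀ u ∈ Icc u₀ umax, HasDerivAt (fun t => (V t - Vt t).re) (W' u) u)
    (T : ℝ → ℝ)
    (hT : ∀ u, T u = Real.exp (∫ t in u₀..u,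
      |1 / (2 * |U t|) * (4 * α t * (V t - Vt t).re + W' t)
        + βt t / |U t| * (V t - Vt t).im
        - (V t).im / |U t| * ((V t - Vt t).re / (Real.sqrt |U t| + βt t))|)) :
    ∀ u ∈ Icc u₀ umax,
      U u < -‖V u‖ / 4 ∧ -‖V u‖ / 4 < 0 ∧
      Real.log (T u)
        ≤ 64 * ε ^ 2 * sInf ((fun t => ‖V t‖) '' Icc u₀ umax) ^ 2
          * ∫ t in u₀..u, ‖V t‖ ^ (-(3 : ℝ) / 2) := by
  intro u hu
  have hkey := fun (t : ℝ) (ht : t ∈ Icc u₀ umax) =>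
    wkb_key u₀ umax V V' V'' V''' hV1 hV2 hV3 hVne ε hε0 hε hc1 hc2 hc3 sqrtV hsq hbranch
      Vt hVt α βt U hα hβt hU W' hW' t ht
  refine ⟨(hkey u hu).1, by have := norm_pos_iff.mpr (hVne u hu); linarith, ?_⟩
  rw [hT u, Real.log_exp]
  have hsub : Icc u₀ u ⊆ Icc u₀ umax := Icc_subset_Icc le_rfl hu.2
  have hVcont : ContinuousOn V (Icc u₀ umax) := fun x hx =>
    ((hV1 x hx).continuousAt).continuousWithinAt
  have habs : ContinuousOn (fun s => ‖V s‖) (Icc u₀ umax) :=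
    continuous_norm.comp_continuousOn hVcont
  have hg : ContinuousOn (fun s => ‖V s‖ ^ (-(3 : ℝ) / 2)) (Icc u₀ umax) :=
    habs.rpow_const (fun x hx => Or.inl (norm_ne_zero_iff.mpr (hVne x hx)))
  have hgInt : MeasureTheory.IntegrableOn
      (fun s => ‖V s‖ ^ (-(3 : ℝ) / 2)) (Ioc u₀ u) :=
    ((hg.mono hsub).integrableOn_Icc).mono_set Ioc_subset_Icc_self
  calc (∫ t in u₀..u,
      |1 / (2 * |U t|) * (4 * α t * (V t - Vt t).re + W' t)
        + βt t / |U t| * (V t - Vt t).im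
        - (V t).im / |U t| * ((V t - Vt t).re / (Real.sqrt |U t| + βt t))|)
      = ∫ t in Ioc u₀ u,
      |1 / (2 * |U t|) * (4 * α t * (V t - Vt t).re + W' t)
        + βt t / |U t| * (V t - Vt t).im
        - (V t).im / |U t| * ((V t - Vt t).re / (Real.sqrt |U t| + βt t))| :=
        intervalIntegral.integral_of_le hu.1
  _ ≤ ∫ t in Ioc u₀ u, 64 * ε ^ 2 * sInf ((fun t => ‖V t‖) '' Icc u₀ umax) ^ 2
        * ‖V t‖ ^ (-(3 : ℝ) / 2) := by
      apply MeasureTheory.integral_mono_of_nonneg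
      · exact Filter.Eventually.of_forall (fun t => abs_nonneg _)
      · exact hgInt.const_mul _
      · refine (MeasureTheory.ae_restrict_iff' measurableSet_Ioc).2
          (Filter.Eventually.of_forall ?_)
        intro s hs
        exact (hkey s ⟨hs.1.le, hs.2.trans hu.2⟩).2
  _ = 64 * ε ^ 2 * sInf ((fun t => ‖V t‖) '' Icc u₀ umax) ^ 2
        * ∫ t in Ioc u₀ u, ‖V t‖ ^ (-(3 : ℝ) / 2) :=
      MeasureTheory.integral_const_mul _ _
  _ = 64 * ε ^ 2 * sInf ((fun t => ‖V t‖) '' Icc u₀ umax) ^ 2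
        * ∫ t in u₀..u, ‖V t‖ ^ (-(3 : ℝ) / 2) := by
      rw [intervalIntegral.integral_of_le hu.1]
end

section
/- Integral bound under weak concavity of |V| (Lemma 4.2). Let V be a continuous nonvanishing complex potential on [u₀, u] such that for all τ ∈ [u₀, u], |V(τ)| ≥ ((τ − u₀)/(u − u₀))·|V(u)| + ((u − τ)/(u − u₀))·|V(u₀)|. Then ∫_{u₀}^{u} |V(τ)|^{−3/2} dτ ≤ 2(u − u₀)/(√|V(u)| · |V(u₀)|). -/
open Set

/-- **Integral bound under weak concavity of `|V|`** (Lemma 4.2).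
If `|V(τ)| ≥ ((τ-u₀)/(u-u₀))|V(u)| + ((u-τ)/(u-u₀))|V(u₀)|` for all
`τ ∈ [u₀, u]`, then `∫_{u₀}^u |V|^{-3/2} ≤ 2(u-u₀)/(√|V(u)|·|V(u₀)|)`. -/
theorem integral_bound_weak_concavity
    (u₀ u : ℝ) (h : u₀ < u)
    (V : ℝ → ℂ) (hV : ContinuousOn V (Icc u₀ u))
    (hne : ∀ τ ∈ Icc u₀ u, V τ ≠ 0)
    (hconc : ∀ τ ∈ Icc u₀ u,
      (τ - u₀) / (u - u₀) * ‖V u‖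
        + (u - τ) / (u - u₀) * ‖V u₀‖ ≤ ‖V τ‖) :
    ∫ τ in u₀..u, ‖V τ‖ ^ (-(3 : ℝ) / 2)
      ≤ 2 * (u - u₀) / (Real.sqrt (‖V u‖) * ‖V u₀‖) := by
  have hL : 0 < u - u₀ := sub_pos.mpr h
  set a := ‖V u₀‖ with ha_def
  set b := ‖V u‖ with hb_def
  have ha : 0 < a := norm_pos_iff.mpr (hne u₀ ⟨le_refl _, h.le⟩)
  have hb : 0 < b := norm_pos_iff.mpr (hne u ⟨h.le, le_refl _⟩)
  set c := (b - a) / (u - u₀) with hc_def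
  set d := a - u₀ * c with hd_def
  have hlin : ∀ τ, c * τ + d = (τ - u₀) / (u - u₀) * b + (u - τ) / (u - u₀) * a := by
    intro τ
    rw [hd_def, hc_def]
    field_simp
    ring
  have hgpos : ∀ τ ∈ Icc u₀ u, 0 < c * τ + d := by
    intro τ hτ
    rw [hlin τ]
    have h1 : 0 < (τ - u₀) * b + (u - τ) * a := by
      rcases eq_or_lt_of_le hτ.1 with heq | hlt
      · nlinarith [mul_pos hL ha, hτ.2]
      · nlinarith [mul_pos (sub_pos.mpr hlt) hb, mul_nonneg (sub_nonneg.mpr hτ.2) ha.le]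
    calc (0:ℝ) < ((τ - u₀) * b + (u - τ) * a) / (u - u₀) := div_pos h1 hL
      _ = (τ - u₀) / (u - u₀) * b + (u - τ) / (u - u₀) * a := by ring
  have hptwise : ∀ τ ∈ Icc u₀ u,
      ‖V τ‖ ^ (-(3 : ℝ) / 2) ≤ (c * τ + d) ^ (-(3 : ℝ) / 2) := by
    intro τ hτ
    have hle : c * τ + d ≤ ‖V τ‖ := by rw [hlin τ]; exact hconc τ hτ
    exact Real.rpow_le_rpow_of_nonpos (hgpos τ hτ) hle (by norm_num)
  -- integrability
  have hVabs : ContinuousOn (fun τ => ‖V τ‖) (Icc u₀ u) :=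
    continuous_norm.comp_continuousOn hV
  have hint_f : IntervalIntegrable (fun τ => ‖V τ‖ ^ (-(3 : ℝ) / 2))
      MeasureTheory.volume u₀ u := by
    apply ContinuousOn.intervalIntegrable
    rw [uIcc_of_le h.le]
    exact hVabs.rpow_const fun τ hτ =>
      Or.inl (norm_ne_zero_iff.mpr (hne τ hτ))
  have hint_g : IntervalIntegrable (fun τ => (c * τ + d) ^ (-(3 : ℝ) / 2))
      MeasureTheory.volume u₀ u := by
    apply ContinuousOn.intervalIntegrable
    rw [uIcc_of_le h.le]
    exact ((continuous_const.mul continuous_id).add continuous_const).continuousOn.rpow_const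
      fun τ hτ => Or.inl (hgpos τ hτ).ne'
  have hmono : (∫ τ in u₀..u, ‖V τ‖ ^ (-(3 : ℝ) / 2))
      ≤ ∫ τ in u₀..u, (c * τ + d) ^ (-(3 : ℝ) / 2) :=
    intervalIntegral.integral_mono_on h.le hint_f hint_g hptwise
  refine hmono.trans ?_
  -- now compute the integral of the linear lower bound
  by_cases hc : c = 0
  · have hba : b = a := by
      have h0 : (b - a) / (u - u₀) = 0 := by rw [← hc_def]; exact hc
      rcases div_eq_zero_iff.mp h0 with h1 | h1
      · linarith
      · exact absurd h1 hL.ne'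
    have : (∫ τ in u₀..u, (c * τ + d) ^ (-(3 : ℝ) / 2))
        = (u - u₀) * a ^ (-(3 : ℝ) / 2) := by
      simp [hc, hd_def, intervalIntegral.integral_const, smul_eq_mul]
    rw [this, hba]
    have hsa : Real.sqrt a > 0 := Real.sqrt_pos.mpr ha
    have h32 : Real.sqrt a * a = a ^ ((3 : ℝ) / 2) := by
      rw [show (3:ℝ)/2 = 1/2 + 1 by norm_num, Real.rpow_add ha, Real.rpow_one,
        ← Real.sqrt_eq_rpow]
    have hkey : a ^ (-(3 : ℝ) / 2) = (Real.sqrt a * a)⁻¹ := by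
      rw [show (-(3:ℝ)/2) = -((3:ℝ)/2) by norm_num, Real.rpow_neg ha.le, h32]
    rw [hkey]
    rw [div_eq_mul_inv]
    have h1 : (0:ℝ) < (Real.sqrt a * a)⁻¹ := by positivity
    nlinarith
  · have hend : (∫ τ in u₀..u, (c * τ + d) ^ (-(3 : ℝ) / 2))
        = c⁻¹ * ((b ^ (-(1:ℝ)/2) - a ^ (-(1:ℝ)/2)) / (-(1:ℝ)/2)) := by
      rw [intervalIntegral.integral_comp_mul_add (fun x => x ^ (-(3 : ℝ) / 2)) hc d]
      have e1 : c * u₀ + d = a := by rw [hd_def]; ring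
      have e2 : c * u + d = b := by
        rw [hd_def, hc_def]; field_simp; ring
      rw [e1, e2, smul_eq_mul]
      rw [integral_rpow (Or.inr ⟨by norm_num, notMem_uIcc_of_lt ha hb⟩)]
      norm_num
    rw [hend]
    set s := Real.sqrt a with hs_def
    set t := Real.sqrt b with ht_def
    have hs : 0 < s := Real.sqrt_pos.mpr ha
    have ht : 0 < t := Real.sqrt_pos.mpr hb
    have has : a = s ^ 2 := (Real.sq_sqrt ha.le).symm
    have hbt : b = t ^ 2 := (Real.sq_sqrt hb.le).symm
    have hra : a ^ (-(1:ℝ)/2) = s⁻¹ := by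
      rw [show (-(1:ℝ)/2) = -(1/2) by norm_num, Real.rpow_neg ha.le,
        ← Real.sqrt_eq_rpow]
    have hrb : b ^ (-(1:ℝ)/2) = t⁻¹ := by
      rw [show (-(1:ℝ)/2) = -(1/2) by norm_num, Real.rpow_neg hb.le,
        ← Real.sqrt_eq_rpow]
    rw [hra, hrb]
    have hba : b - a ≠ 0 := fun h0 => hc (by rw [hc_def, h0, zero_div])
    have hst : t ^ 2 - s ^ 2 ≠ 0 := by rw [← has, ← hbt]; exact hba
    have hceq : c = (t ^ 2 - s ^ 2) / (u - u₀) := by rw [hc_def, has, hbt]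
    have hkey : c⁻¹ * ((t⁻¹ - s⁻¹) / (-(1:ℝ)/2)) = 2 * (u - u₀) / (s * t * (s + t)) := by
      rw [hceq]
      field_simp
      ring
    rw [hkey, has, show t * s ^ 2 = s * t * s from by ring]
    gcongr
    nlinarith
end

section
/- WKB T-estimate allowing Im V < 0 (Lemma 4.3). Let I = [u₀, u_max] and V : I → ℂ a C³ nonvanishing potential satisfying sup_I |V'| ≤ ε·inf_I |V|^{3/2}, sup_I |V''| ≤ ε²·inf_I |V|², sup_I |V'''| ≤ ε³·inf_I |V|^{5/2} with ε < 1/8. Let J = [u₀, u₁] ⊂ I and assume: (i) for all u ∈ J and τ ∈ [u₀, u], |V(τ)| ≥ ((τ−u₀)/(u−u₀))|V(u)| + ((u−τ)/(u−u₀))|V(u₀)|; (ii) Im √V > Re √V ≥ 0 on J; (iii) √|V| ≥ 200 ε² |J| · inf_I |V|² / |V(u₀)| on J; (iv) |J| · |Im V| · √|V| ≤ |V(u₀)|/30 on J. Then, with the WKB data ỹ = √V − V'/(4V) = α + iβ̃, Ṽ = V + 5(V')²/(16V²) − V''/(4V), U = Re(V−Ṽ) − β̃², and the choice g = 18 ε²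 inf_I |V|²/(|V|·|Im V|), Theorem 3.3 applies on J with T(u₀) = 1, and log T(u) ≤ 100 ε² · inf_I |V|² · ∫_{u₀}^{u} |V|^{−3/2} for all u ∈ J. -/
open Set

set_option maxHeartbeats 1000000 in
/-- **WKB T-estimate allowing `Im V < 0`** (Lemma 4.3).
On `I = [u₀, u_max]` with subinterval `J = [u₀, u₁]`, for a `C³` nonvanishing
potential satisfying the semiclassical bounds with `ε < 1/8`, the weak concavity
condition (i), the branch condition (ii) `Im √V > Re √V ≥ 0` on `J`, and the
size conditions (iii), (iv), the T-method (Theorem 3.3) applies on `J` with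
`T(u₀) = 1` and `g = 18 ε² (inf_I|V|)²/(|V|·|Im V|)`: indeed `U < 0` on `J`, the
compatibility condition for `g` holds, and
`log T(u) ≤ 100 ε² (inf_I |V|)² ∫_{u₀}^u |V|^{-3/2}` for all `u ∈ J`. -/
theorem wkb_T_estimate_imV_neg
    (u₀ u₁ umax : ℝ) (h01 : u₀ ≤ u₁) (h1m : u₁ ≤ umax)
    (V V' V'' V''' : ℝ → ℂ)
    (hV1 : ∀ u ∈ Icc u₀ umax, HasDerivAt V (V' u) u)
    (hV2 : ∀ u ∈ Icc u₀ umax, HasDerivAt V' (V'' u) u)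
    (hV3 : ∀ u ∈ Icc u₀ umax, HasDerivAt V'' (V''' u) u)
    (hVne : ∀ u ∈ Icc u₀ umax, V u ≠ 0)
    (ε : ℝ) (hε0 : 0 < ε) (hε : ε < 1 / 8)
    (hc1 : ∀ u ∈ Icc u₀ umax, ‖V' u‖
      ≤ ε * sInf ((fun t => ‖V t‖) '' Icc u₀ umax) ^ ((3 : ℝ) / 2))
    (hc2 : ∀ u ∈ Icc u₀ umax, ‖V'' u‖
      ≤ ε ^ 2 * sInf ((fun t => ‖V t‖) '' Icc u₀ umax) ^ 2)
    (hc3 : ∀ u ∈ Icc u₀ umax, ‖V''' u‖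
      ≤ ε ^ 3 * sInf ((fun t => ‖V t‖) '' Icc u₀ umax) ^ ((5 : ℝ) / 2))
    -- (i) weak concavity of |V| on [u₀, u] for each u ∈ J
    (hconc : ∀ u ∈ Icc u₀ u₁, ∀ τ ∈ Icc u₀ u,
      (τ - u₀) / (u - u₀) * ‖V u‖
        + (u - τ) / (u - u₀) * ‖V u₀‖ ≤ ‖V τ‖)
    -- (ii) branch condition on J
    (sqrtV : ℝ → ℂ)
    (hsq : ∀ u ∈ Icc u₀ u₁, sqrtV u ^ 2 = V u)
    (hbranch : ∀ u ∈ Icc u₀ u₁, 0 ≤ (sqrtV u).re ∧ (sqrtV u).re < (sqrtV u).im)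
    -- (iii)
    (hVl : ∀ u ∈ Icc u₀ u₁,
      200 * ε ^ 2 * (u₁ - u₀) * sInf ((fun t => ‖V t‖) '' Icc u₀ umax) ^ 2
          / ‖V u₀‖
        ≤ Real.sqrt (‖V u‖))
    -- (iv)
    (hJu : ∀ u ∈ Icc u₀ u₁,
      (u₁ - u₀) * |(V u).im| * Real.sqrt (‖V u‖) ≤ ‖V u₀‖ / 30)
    -- WKB data
    (Vt : ℝ → ℂ)
    (hVt : ∀ u, Vt u = V u + 5 * (V' u) ^ 2 / (16 * (V u) ^ 2) - V'' u / (4 * V u))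
    (α βt U : ℝ → ℝ)
    (hα : ∀ u, α u = (sqrtV u - V' u / (4 * V u)).re)
    (hβt : ∀ u, βt u = (sqrtV u - V' u / (4 * V u)).im)
    (hU : ∀ u, U u = (V u - Vt u).re - βt u ^ 2)
    (W' : ℝ → ℝ)
    (hW' : ∀ u ∈ Icc u₀ u₁, HasDerivAt (fun t => (V t - Vt t).re) (W' u) u)
    (g : ℝ → ℝ)
    (hgdef : ∀ u, g u = 18 * ε ^ 2
      * sInf ((fun t => ‖V t‖) '' Icc u₀ umax) ^ 2
      / (‖V u‖ * |(V u).im|))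
    (T : ℝ → ℝ)
    (hT : ∀ u, T u = Real.exp (∫ t in u₀..u,
      |1 / (2 * |U t|) * (4 * α t * (V t - Vt t).re + W' t)
        + βt t / |U t| * (V t - Vt t).im
        - (V t).im / |U t| * ((V t - Vt t).re / (Real.sqrt |U t| + βt t))|
      + |(V t).im| / Real.sqrt |U t| * g t)) :
    ∀ u ∈ Icc u₀ u₁,
      U u < 0 ∧
      ((0 ≤ (V u).im → -((T u - 1) / T u) ≤ g u) ∧ ((V u).im < 0 → T u - 1 ≤ g u)) ∧
      Real.log (T u)
        ≤ 100 * ε ^ 2 * sInf ((fun t => ‖V t‖) '' Icc u₀ umax) ^ 2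
          * ∫ t in u₀..u, ‖V t‖ ^ (-(3 : ℝ) / 2) := by
  set m := sInf ((fun t => ‖V t‖) '' Icc u₀ umax) with hm
  have h0m : u₀ ≤ umax := h01.trans h1m
  have hVcont : ContinuousOn V (Icc u₀ umax) :=
    fun t ht => (hV1 t ht).continuousAt.continuousWithinAt
  -- the infimum is positive and is a lower bound
  obtain ⟨x₀, hx₀, hmin⟩ := (isCompact_Icc (a := u₀) (b := umax)).exists_isMinOn
    ⟨u₀, le_refl _, h0m⟩ ((continuous_norm.comp_continuousOn hVcont))
  have hmeq : m = ‖V x₀‖ := by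
    refine IsLeast.csInf_eq ⟨⟨x₀, hx₀, rfl⟩, ?_⟩
    rintro y ⟨t, ht, rfl⟩; exact hmin ht
  have hm0 : 0 < m := by
    rw [hmeq]; exact (norm_pos_iff.2 (hVne x₀ hx₀))
  have hm_le : ∀ t ∈ Icc u₀ umax, m ≤ ‖V t‖ := by
    intro t ht; rw [hmeq]; exact hmin ht
  -- nonnegativity of g
  have hg_nonneg : ∀ s, 0 ≤ g s := by
    intro s; rw [hgdef]; positivity
  -- the integrand of log T is nonnegative
  set f : ℝ → ℝ := fun t =>
      |1 / (2 * |U t|) * (4 * α t * (V t - Vt t).re + W' t)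
        + βt t / |U t| * (V t - Vt t).im
        - (V t).im / |U t| * ((V t - Vt t).re / (Real.sqrt |U t| + βt t))|
      + |(V t).im| / Real.sqrt |U t| * g t with hf
  have hf_nonneg : ∀ t, 0 ≤ f t := by
    intro t
    have h1 : (0:ℝ) ≤ |(V t).im| / Real.sqrt |U t| * g t :=
      mul_nonneg (div_nonneg (abs_nonneg _) (Real.sqrt_nonneg _)) (hg_nonneg t)
    exact add_nonneg (abs_nonneg _) h1
  -- the key pointwise estimates
  have key : ∀ t ∈ Icc u₀ u₁, U t < 0 ∧
      f t ≤ 100 * ε ^ 2 * m ^ 2 * ‖V t‖ ^ (-(3 : ℝ) / 2) := by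
    intro t ht
    have htI : t ∈ Icc u₀ umax := ⟨ht.1, ht.2.trans h1m⟩
    have hVt0 : V t ≠ 0 := hVne t htI
    set v := ‖V t‖ with hvdef
    have hv : 0 < v := norm_pos_iff.2 hVt0
    set sv := Real.sqrt v with hsvdef
    have hsv : 0 < sv := Real.sqrt_pos.2 hv
    have hsv2 : sv ^ 2 = v := Real.sq_sqrt hv.le
    have hmv : m ≤ v := hm_le t htI
    set sm := Real.sqrt m with hsmdef
    have hsm0 : 0 < sm := Real.sqrt_pos.2 hm0
    have hsm2 : sm ^ 2 = m := Real.sq_sqrt hm0.le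
    have hsmsv : sm ≤ sv := Real.sqrt_le_sqrt hmv
    -- derivative bounds
    have hA1 : ‖V' t‖ ≤ ε * (m * sm) := by
      have h := hc1 t htI
      rwa [show ((3:ℝ)/2) = 1 + 1/2 by norm_num, Real.rpow_add hm0, Real.rpow_one,
        ← Real.sqrt_eq_rpow] at h
    have hA2 : ‖V'' t‖ ≤ ε ^ 2 * m ^ 2 := hc2 t htI
    have hA3 : ‖V''' t‖ ≤ ε ^ 3 * (m ^ 2 * sm) := by
      have h := hc3 t htI
      rwa [show ((5:ℝ)/2) = ((2:ℕ):ℝ) + 1/2 by norm_num, Real.rpow_add hm0,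
        Real.rpow_natCast, ← Real.sqrt_eq_rpow] at h
    have hA1sq : ‖V' t‖ ^ 2 ≤ ε ^ 2 * m ^ 2 * m := by
      calc ‖V' t‖ ^ 2 ≤ (ε * (m * sm)) ^ 2 :=
          pow_le_pow_left₀ (norm_nonneg _) hA1 2
        _ = ε ^ 2 * m ^ 2 * sm ^ 2 := by ring
        _ = ε ^ 2 * m ^ 2 * m := by rw [hsm2]
    have hA1cube : ‖V' t‖ ^ 3 ≤ ε ^ 3 * (m ^ 2 * sm) * (m * m) := by
      calc ‖V' t‖ ^ 3 ≤ (ε * (m * sm)) ^ 3 :=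
          pow_le_pow_left₀ (norm_nonneg _) hA1 3
        _ = ε ^ 3 * (m ^ 2 * sm) * (m * sm ^ 2) := by ring
        _ = ε ^ 3 * (m ^ 2 * sm) * (m * m) := by rw [hsm2]
    have hA21 : ‖V'' t‖ * ‖V' t‖ ≤ ε ^ 3 * (m ^ 2 * sm) * m := by
      calc ‖V'' t‖ * ‖V' t‖ ≤ (ε ^ 2 * m ^ 2) * (ε * (m * sm)) :=
          mul_le_mul hA2 hA1 (norm_nonneg _) (by positivity)
        _ = ε ^ 3 * (m ^ 2 * sm) * m := by ring
    have hA12 : ‖V' t‖ * ‖V'' t‖ ≤ ε ^ 3 * (m ^ 2 * sm) * m := by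
      calc ‖V' t‖ * ‖V'' t‖ = ‖V'' t‖ * ‖V' t‖ := by ring
        _ ≤ ε ^ 3 * (m ^ 2 * sm) * m := hA21
    -- branch data
    obtain ⟨ha, hab⟩ := hbranch t ht
    have habv : (sqrtV t).re ^ 2 + (sqrtV t).im ^ 2 = v := by
      have h1 : ‖sqrtV t‖ ^ 2 = v := by rw [← norm_pow, hsq t ht]
      rw [Complex.sq_norm, Complex.normSq_apply] at h1
      linarith [h1]
    have hb0 : (0:ℝ) ≤ (sqrtV t).im := le_trans ha hab.le
    have hsq_ab : 0 ≤ ((sqrtV t).im - (sqrtV t).re) * ((sqrtV t).im + (sqrtV t).re) :=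
      mul_nonneg (by linarith) (by linarith)
    have hre2 : (sqrtV t).re ^ 2 ≤ (sqrtV t).im ^ 2 := by linarith [hsq_ab]
    have hb2 : sv ^ 2 ≤ 2 * (sqrtV t).im ^ 2 := by linarith [hre2, habv, hsv2]
    have hb_lb : (7/10) * sv ≤ (sqrtV t).im := by
      by_contra hcon
      push_neg at hcon
      linarith [mul_le_mul hcon.le hcon.le hb0 (by positivity : (0:ℝ) ≤ (7/10)*sv),
        mul_pos hsv hsv]
    have ha_ub : (sqrtV t).re ≤ (71/100) * sv := by
      by_contra hcon
      push_neg at hcon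
      linarith [mul_le_mul hcon.le hcon.le (by linarith : (0:ℝ) ≤ (71/100)*sv) ha,
        mul_pos hsv hsv]
    have hb_ub : (sqrtV t).im ≤ sv := by
      by_contra hcon
      push_neg at hcon
      linarith [mul_lt_mul'' hcon hcon hsv.le hsv.le, habv, sq_nonneg (sqrtV t).re]
    -- bound on V'/(4V)
    have h4V : ‖4 * V t‖ = 4 * v := by
      rw [norm_mul]; norm_num [← hvdef]
    have hw_abs : ‖V' t / (4 * V t)‖ ≤ sv / 32 := by
      rw [norm_div, h4V, div_le_iff₀ (by positivity)]
      calc ‖V' t‖ ≤ ε * (m * sm) := hA1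
        _ ≤ (1/8) * (v * sv) := by
            have h1 : m * sm ≤ v * sv := mul_le_mul hmv hsmsv hsm0.le hv.le
            have h2 : ε * (m * sm) ≤ (1/8) * (m * sm) :=
              mul_le_mul_of_nonneg_right hε.le (by positivity)
            linarith
        _ = sv / 32 * (4 * v) := by ring
    have hre_le : |(V' t / (4 * V t)).re| ≤ sv / 32 :=
      (Complex.abs_re_le_norm _).trans hw_abs
    have him_le : |(V' t / (4 * V t)).im| ≤ sv / 32 :=
      (Complex.abs_im_le_norm _).trans hw_abs
    have hα_eq : α t = (sqrtV t).re - (V' t / (4 * V t)).re := by rw [hα, Complex.sub_re]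
    have hβ_eq : βt t = (sqrtV t).im - (V' t / (4 * V t)).im := by rw [hβt, Complex.sub_im]
    have hβ_lb : (2/3) * sv ≤ βt t := by
      rw [hβ_eq]; have h1 := abs_le.1 him_le; linarith
    have hβ_ub : βt t ≤ (21/20) * sv := by
      rw [hβ_eq]; have h1 := abs_le.1 him_le; linarith
    have hβpos : 0 < βt t := lt_of_lt_of_le (by positivity) hβ_lb
    have hα_abs : |α t| ≤ (3/4) * sv := by
      rw [hα_eq]
      have h1 := abs_le.1 hre_le
      rw [abs_le]; constructor <;> linarith
    -- bound on D = V - Vt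
    set D : ℂ := V'' t / (4 * V t) - 5 * (V' t) ^ 2 / (16 * (V t) ^ 2) with hDdef
    have hD : V t - Vt t = D := by rw [hVt]; ring
    have h16V2 : ‖16 * (V t) ^ 2‖ = 16 * v ^ 2 := by
      rw [norm_mul, norm_pow]; norm_num [← hvdef]
    have habs5 : ‖(5 : ℂ)‖ = 5 := by norm_num
    have triC : ∀ x y : ℂ, ‖x - y‖ ≤ ‖x‖ + ‖y‖ := by
      intro x y
      exact norm_sub_le x y
    have hD_abs : ‖D‖ ≤ (9/16) * (ε ^ 2 * m ^ 2 / v) := by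
      have tri : ‖D‖ ≤ ‖V'' t / (4 * V t)‖
          + ‖5 * (V' t) ^ 2 / (16 * (V t) ^ 2)‖ := by
        rw [hDdef]; exact triC _ _
      have h1 : ‖V'' t / (4 * V t)‖ ≤ (1/4) * (ε ^ 2 * m ^ 2 / v) := by
        rw [norm_div, h4V, show (1/4) * (ε ^ 2 * m ^ 2 / v) = ε ^ 2 * m ^ 2 / (4 * v) by ring]
        exact div_le_div₀ (by positivity) hA2 (by positivity) le_rfl
      have h2 : ‖5 * (V' t) ^ 2 / (16 * (V t) ^ 2)‖
          ≤ (5/16) * (ε ^ 2 * m ^ 2 / v) := by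
        rw [norm_div, norm_mul, norm_pow, h16V2, habs5,
          show (5/16) * (ε ^ 2 * m ^ 2 / v) = 5 * (ε ^ 2 * m ^ 2) * v / (16 * v ^ 2) by
            field_simp [hv.ne']]
        refine div_le_div₀ (by positivity) ?_ (by positivity) le_rfl
        calc 5 * ‖V' t‖ ^ 2 ≤ 5 * (ε ^ 2 * m ^ 2 * m) := by linarith [hA1sq]
          _ ≤ 5 * (ε ^ 2 * m ^ 2) * v := by
              have h5 : (0:ℝ) ≤ 5 * (ε ^ 2 * m ^ 2) := by positivity
              linarith [mul_le_mul_of_nonneg_left hmv h5]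
      linarith [tri]
    have hReD : |(V t - Vt t).re| ≤ (9/16) * (ε ^ 2 * m ^ 2 / v) := by
      rw [hD]; exact (Complex.abs_re_le_norm D).trans hD_abs
    have hImD : |(V t - Vt t).im| ≤ (9/16) * (ε ^ 2 * m ^ 2 / v) := by
      rw [hD]; exact (Complex.abs_im_le_norm D).trans hD_abs
    have hεm : ε ^ 2 * m ^ 2 ≤ (1/64) * v ^ 2 := by
      have h1 : ε ^ 2 ≤ (1/64 : ℝ) := by
        have h := mul_le_mul hε.le hε.le hε0.le (by norm_num : (0:ℝ) ≤ 1/8)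
        calc ε ^ 2 = ε * ε := sq ε
          _ ≤ 1/8 * (1/8) := h
          _ = 1/64 := by norm_num
      have h2 : m ^ 2 ≤ v ^ 2 := pow_le_pow_left₀ hm0.le hmv 2
      calc ε ^ 2 * m ^ 2 ≤ (1/64) * m ^ 2 := mul_le_mul_of_nonneg_right h1 (by positivity)
        _ ≤ (1/64) * v ^ 2 := by linarith
    have hQsmall : (9/16) * (ε ^ 2 * m ^ 2 / v) ≤ (9/1024) * v := by
      rw [show (9/16) * (ε ^ 2 * m ^ 2 / v) = (9/16) * (ε ^ 2 * m ^ 2) / v by ring,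
        div_le_iff₀ hv]
      linarith [hεm]
    have hβsq : (4/9) * v ≤ βt t ^ 2 := by
      have h1 := mul_le_mul hβ_lb hβ_lb (by positivity) (by linarith)
      linarith [h1, hsv2]
    have hUneg : U t < 0 := by
      rw [hU]
      have h1 := (abs_le.1 hReD).2
      linarith [hβsq, hQsmall, hv]
    have hUpos : 0 < |U t| := abs_pos.2 hUneg.ne
    have hUabs_lb : (2/5) * v ≤ |U t| := by
      rw [abs_of_neg hUneg, hU]
      have h1 := abs_le.1 hReD
      linarith [h1.1, h1.2, hβsq, hQsmall, hv]
    have hsU_lb : (3/5) * sv ≤ Real.sqrt |U t| := by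
      have h1 : (3/5) * sv = Real.sqrt ((9/25) * v) := by
        rw [show (9/25) * v = ((3/5) * sv) ^ 2 by rw [← hsv2]; ring,
          Real.sqrt_sq (by positivity)]
      rw [h1]
      exact Real.sqrt_le_sqrt (by linarith)
    have hsU_pos : 0 < Real.sqrt |U t| := Real.sqrt_pos.2 hUpos
    have hden3_pos : 0 < Real.sqrt |U t| + βt t := by linarith
    -- derivative of (V - Vt).re and bound on W'
    have hdV := hV1 t htI
    have hdV' := hV2 t htI
    have hdV'' := hV3 t htI
    have h4ne : (4 : ℂ) * V t ≠ 0 := by simp [hVt0]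
    set D' : ℂ := V''' t / (4 * V t) - V'' t * V' t / (4 * (V t) ^ 2)
        - 5 * V' t * V'' t / (8 * (V t) ^ 2) + 5 * (V' t) ^ 3 / (8 * (V t) ^ 3) with hD'def
    have hq : HasDerivAt (fun s => V'' s / (4 * V s) - 5 * (V' s * V' s) / (16 * (V s * V s))) D' t := by
      have h16ne : (16 : ℂ) * (V t * V t) ≠ 0 := by simp [hVt0]
      have hq1 : HasDerivAt (fun s => V'' s / (4 * V s))
          ((V''' t * (4 * V t) - V'' t * (4 * V' t)) / (4 * V t) ^ 2) t :=
        hdV''.div (hdV.const_mul 4) h4ne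
      have hq1' : HasDerivAt (fun s => V'' s / (4 * V s))
          (V''' t / (4 * V t) - V'' t * V' t / (4 * (V t) ^ 2)) t :=
        hq1.congr_deriv (by field_simp [hVt0])
      have hq2 := ((hdV'.mul hdV').const_mul (5:ℂ)).div ((hdV.mul hdV).const_mul (16:ℂ)) h16ne
      have hq2' : HasDerivAt (fun s => 5 * (V' s * V' s) / (16 * (V s * V s)))
          (5 * V' t * V'' t / (8 * (V t) ^ 2) - 5 * (V' t) ^ 3 / (8 * (V t) ^ 3)) t :=
        hq2.congr_deriv (by simp only [Pi.mul_apply]; field_simp [hVt0]; ring)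
      exact (hq1'.sub hq2').congr_deriv (by rw [hD'def]; ring)
    have hDerRe : HasDerivAt (fun s => (V s - Vt s).re) D'.re t := by
      have hfun : (fun s => (V s - Vt s).re)
          = (fun s => (V'' s / (4 * V s) - 5 * (V' s * V' s) / (16 * (V s * V s))).re) := by
        funext s; congr 1; rw [hVt s]; ring
      rw [hfun]
      exact Complex.reCLM.hasFDerivAt.comp_hasDerivAt t hq
    have hW'eq : W' t = D'.re := (hW' t ht).unique hDerRe
    -- bound |D'|
    have h4V2 : ‖4 * (V t) ^ 2‖ = 4 * v ^ 2 := by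
      rw [norm_mul, norm_pow]; norm_num [← hvdef]
    have h8V2 : ‖8 * (V t) ^ 2‖ = 8 * v ^ 2 := by
      rw [norm_mul, norm_pow]; norm_num [← hvdef]
    have h8V3 : ‖8 * (V t) ^ 3‖ = 8 * v ^ 3 := by
      rw [norm_mul, norm_pow]; norm_num [← hvdef]
    have hD'_abs : ‖D'‖ ≤ (7/4) * (ε ^ 3 * (m ^ 2 * sm) / v) := by
      have n1 : ‖D'‖ ≤ ‖V''' t / (4 * V t)‖
          + ‖V'' t * V' t / (4 * (V t) ^ 2)‖
          + ‖5 * V' t * V'' t / (8 * (V t) ^ 2)‖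
          + ‖5 * (V' t) ^ 3 / (8 * (V t) ^ 3)‖ := by
        rw [hD'def]
        have addC : ∀ x y : ℂ, ‖x + y‖ ≤ ‖x‖ + ‖y‖ := by
          intro x y
          exact norm_add_le x y
        have t1 := addC (V''' t / (4 * V t) - V'' t * V' t / (4 * (V t) ^ 2)
            - 5 * V' t * V'' t / (8 * (V t) ^ 2)) (5 * (V' t) ^ 3 / (8 * (V t) ^ 3))
        have t2 := triC (V''' t / (4 * V t) - V'' t * V' t / (4 * (V t) ^ 2))
            (5 * V' t * V'' t / (8 * (V t) ^ 2))
        have t3 := triC (V''' t / (4 * V t)) (V'' t * V' t / (4 * (V t) ^ 2))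
        exact t1.trans (by linarith)
      have b1 : ‖V''' t / (4 * V t)‖ ≤ (1/4) * (ε ^ 3 * (m ^ 2 * sm) / v) := by
        rw [norm_div, h4V, show (1/4) * (ε ^ 3 * (m ^ 2 * sm) / v)
          = ε ^ 3 * (m ^ 2 * sm) / (4 * v) by ring]
        exact div_le_div₀ (by positivity) hA3 (by positivity) le_rfl
      have b2 : ‖V'' t * V' t / (4 * (V t) ^ 2)‖
          ≤ (1/4) * (ε ^ 3 * (m ^ 2 * sm) / v) := by
        rw [norm_div, norm_mul, h4V2, show (1/4) * (ε ^ 3 * (m ^ 2 * sm) / v)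
          = ε ^ 3 * (m ^ 2 * sm) * v / (4 * v ^ 2) by field_simp [hv.ne']]
        exact div_le_div₀ (by positivity)
          (hA21.trans (mul_le_mul_of_nonneg_left hmv (by positivity)))
          (by positivity) le_rfl
      have b3 : ‖5 * V' t * V'' t / (8 * (V t) ^ 2)‖
          ≤ (5/8) * (ε ^ 3 * (m ^ 2 * sm) / v) := by
        rw [norm_div, norm_mul, norm_mul, h8V2, habs5, show (5/8) * (ε ^ 3 * (m ^ 2 * sm) / v)
          = 5 * (ε ^ 3 * (m ^ 2 * sm)) * v / (8 * v ^ 2) by field_simp [hv.ne']]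
        refine div_le_div₀ (by positivity) ?_ (by positivity) le_rfl
        have h1 : ε ^ 3 * (m ^ 2 * sm) * m ≤ ε ^ 3 * (m ^ 2 * sm) * v :=
          mul_le_mul_of_nonneg_left hmv (by positivity)
        linarith [hA12, h1]
      have b4 : ‖5 * (V' t) ^ 3 / (8 * (V t) ^ 3)‖
          ≤ (5/8) * (ε ^ 3 * (m ^ 2 * sm) / v) := by
        rw [norm_div, norm_mul, norm_pow, h8V3, habs5, show (5/8) * (ε ^ 3 * (m ^ 2 * sm) / v)
          = 5 * (ε ^ 3 * (m ^ 2 * sm)) * v ^ 2 / (8 * v ^ 3) by field_simp [hv.ne']]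
        refine div_le_div₀ (by positivity) ?_ (by positivity) le_rfl
        have h1 : ε ^ 3 * (m ^ 2 * sm) * (m * m) ≤ ε ^ 3 * (m ^ 2 * sm) * (v * v) :=
          mul_le_mul_of_nonneg_left (mul_le_mul hmv hmv hm0.le hv.le) (by positivity)
        linarith [hA1cube, h1]
      linarith
    have hW'b : |W' t| ≤ (7/32) * (ε ^ 2 * m ^ 2 / v) * sv := by
      rw [hW'eq]
      refine (Complex.abs_re_le_norm D').trans (hD'_abs.trans ?_)
      rw [show (7/32) * (ε ^ 2 * m ^ 2 / v) * sv = (7/32) * (ε ^ 2 * m ^ 2 * sv) / v by ring,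
        show (7/4) * (ε ^ 3 * (m ^ 2 * sm) / v) = (7/4) * (ε ^ 3 * (m ^ 2 * sm)) / v by ring]
      refine div_le_div₀ (by positivity) ?_ hv le_rfl
      have h1 : ε ^ 3 ≤ (1/8) * ε ^ 2 := by
        have h := mul_le_mul_of_nonneg_right hε.le (sq_nonneg ε)
        linarith [h]
      have h2 : ε ^ 3 * (m ^ 2 * sm) ≤ (1/8) * ε ^ 2 * (m ^ 2 * sm) :=
        mul_le_mul_of_nonneg_right h1 (by positivity)
      have h3 : (1/8) * ε ^ 2 * (m ^ 2 * sm) ≤ (1/8) * ε ^ 2 * (m ^ 2 * sv) := by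
        have := mul_le_mul_of_nonneg_left hsmsv (by positivity : (0:ℝ) ≤ (1/8) * ε ^ 2 * m ^ 2)
        linarith [this]
      linarith [h2, h3]
    -- the E-term bounds
    have hE1 : |1 / (2 * |U t|) * (4 * α t * (V t - Vt t).re + W' t)|
        ≤ (305/128) * (ε ^ 2 * m ^ 2 / (v * sv)) := by
      have hXb : |4 * α t * (V t - Vt t).re + W' t|
          ≤ (61/32) * (ε ^ 2 * m ^ 2 / v) * sv := by
        calc |4 * α t * (V t - Vt t).re + W' t|
            ≤ |4 * α t * (V t - Vt t).re| + |W' t| := abs_add_le _ _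
          _ ≤ 4 * ((3/4) * sv) * ((9/16) * (ε ^ 2 * m ^ 2 / v))
              + (7/32) * (ε ^ 2 * m ^ 2 / v) * sv := by
              have h2 : |4 * α t * (V t - Vt t).re| = 4 * |α t| * |(V t - Vt t).re| := by
                rw [abs_mul, abs_mul]; norm_num
              rw [h2]
              have h3 : 4 * |α t| * |(V t - Vt t).re|
                  ≤ 4 * ((3/4) * sv) * ((9/16) * (ε ^ 2 * m ^ 2 / v)) := by
                have h4 : 4 * |α t| ≤ 4 * ((3/4) * sv) := by linarith
                exact mul_le_mul h4 hReD (abs_nonneg _) (by positivity)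
              linarith [hW'b]
          _ = (61/32) * (ε ^ 2 * m ^ 2 / v) * sv := by ring
      rw [abs_mul, abs_of_pos (show (0:ℝ) < 1 / (2 * |U t|) from by
        have := hUpos; positivity)]
      calc 1 / (2 * |U t|) * |4 * α t * (V t - Vt t).re + W' t|
          ≤ 1 / ((4/5) * v) * ((61/32) * (ε ^ 2 * m ^ 2 / v) * sv) := by
            refine mul_le_mul ?_ hXb (abs_nonneg _) (by positivity)
            exact one_div_le_one_div_of_le (by positivity) (by linarith)
        _ = (305/128) * (ε ^ 2 * m ^ 2 / (v * sv)) := by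
            rw [← hsv2]; field_simp [hsv.ne']; ring
    have hE2 : |βt t / |U t| * (V t - Vt t).im| ≤ (189/128) * (ε ^ 2 * m ^ 2 / (v * sv)) := by
      rw [abs_mul, abs_div, abs_abs, abs_of_pos hβpos]
      calc βt t / |U t| * |(V t - Vt t).im|
          ≤ ((21/20) * sv / ((2/5) * v)) * ((9/16) * (ε ^ 2 * m ^ 2 / v)) := by
            refine mul_le_mul ?_ hImD (abs_nonneg _) (by positivity)
            exact div_le_div₀ (by positivity) hβ_ub (by positivity) hUabs_lb
        _ = (189/128) * (ε ^ 2 * m ^ 2 / (v * sv)) := by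
            rw [← hsv2]; field_simp [hsv.ne']; ring
    have hE3 : |(V t).im / |U t| * ((V t - Vt t).re / (Real.sqrt |U t| + βt t))|
        ≤ (675/608) * (ε ^ 2 * m ^ 2 / (v * sv)) := by
      rw [abs_mul, abs_div, abs_abs, abs_div, abs_of_pos hden3_pos]
      have himv : |(V t).im| ≤ v := Complex.abs_im_le_norm (V t)
      calc |(V t).im| / |U t| * (|(V t - Vt t).re| / (Real.sqrt |U t| + βt t))
          ≤ (v / ((2/5) * v)) * (((9/16) * (ε ^ 2 * m ^ 2 / v)) / ((19/15) * sv)) := by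
            refine mul_le_mul ?_ ?_ (by positivity) (by positivity)
            · exact div_le_div₀ hv.le himv (by positivity) hUabs_lb
            · exact div_le_div₀ (by positivity) hReD (by positivity) (by linarith)
        _ = (675/608) * (ε ^ 2 * m ^ 2 / (v * sv)) := by
            rw [← hsv2]; field_simp [hsv.ne']; ring
    have hE4 : |(V t).im| / Real.sqrt |U t| * g t ≤ 30 * (ε ^ 2 * m ^ 2 / (v * sv)) := by
      rcases eq_or_ne ((V t).im) 0 with him0 | him0
      · rw [him0]
        simp only [abs_zero, zero_div, zero_mul]
        positivity
      · rw [hgdef, ← hvdef]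
        have habsim : 0 < |(V t).im| := abs_pos.2 him0
        have heq : |(V t).im| / Real.sqrt |U t| * (18 * ε ^ 2 * m ^ 2 / (v * |(V t).im|))
            = 18 * (ε ^ 2 * m ^ 2) / (v * Real.sqrt |U t|) := by
          field_simp [habsim.ne', hsU_pos.ne', hv.ne']
        rw [heq]
        calc 18 * (ε ^ 2 * m ^ 2) / (v * Real.sqrt |U t|)
            ≤ 18 * (ε ^ 2 * m ^ 2) / (v * ((3/5) * sv)) := by
              refine div_le_div_of_nonneg_left (by positivity) (by positivity) ?_
              exact mul_le_mul_of_nonneg_left hsU_lb hv.le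
          _ = 30 * (ε ^ 2 * m ^ 2 / (v * sv)) := by
              field_simp [hv.ne', hsv.ne']
              ring
    -- conclusion
    refine ⟨hUneg, ?_⟩
    have hrpow : v ^ (-(3:ℝ)/2) = 1 / (v * sv) := by
      rw [show (-(3:ℝ)/2) = -(1 + 1/2) by norm_num, Real.rpow_neg hv.le, Real.rpow_add hv,
        Real.rpow_one, ← Real.sqrt_eq_rpow, ← hsvdef, one_div]
    have habs3 : ∀ x y z : ℝ, |x + y - z| ≤ |x| + |y| + |z| := by
      intro x y z
      have h1 : |x + y - z| ≤ |x + y| + |-z| := by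
        rw [sub_eq_add_neg]; exact abs_add_le _ _
      have h2 := abs_add_le x y
      rw [abs_neg] at h1
      linarith
    have hQ2pos : (0:ℝ) ≤ ε ^ 2 * m ^ 2 / (v * sv) := by positivity
    simp only [hf]
    calc |1 / (2 * |U t|) * (4 * α t * (V t - Vt t).re + W' t)
          + βt t / |U t| * (V t - Vt t).im
          - (V t).im / |U t| * ((V t - Vt t).re / (Real.sqrt |U t| + βt t))|
        + |(V t).im| / Real.sqrt |U t| * g t
        ≤ ((305/128) * (ε ^ 2 * m ^ 2 / (v * sv)) + (189/128) * (ε ^ 2 * m ^ 2 / (v * sv))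
            + (675/608) * (ε ^ 2 * m ^ 2 / (v * sv))) + 30 * (ε ^ 2 * m ^ 2 / (v * sv)) := by
          refine add_le_add ((habs3 _ _ _).trans ?_) hE4
          linarith [hE1, hE2, hE3]
      _ ≤ 100 * (ε ^ 2 * m ^ 2 / (v * sv)) := by linarith
      _ = 100 * ε ^ 2 * m ^ 2 * v ^ (-(3:ℝ)/2) := by rw [hrpow]; ring
  intro u hu
  have huI : u ∈ Icc u₀ umax := ⟨hu.1, hu.2.trans h1m⟩
  have hu0 : u₀ ≤ u := hu.1
  have hTu : 1 ≤ T u := by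
    rw [hT]
    exact Real.one_le_exp (intervalIntegral.integral_nonneg hu0 (fun t _ => hf_nonneg t))
  refine ⟨(key u hu).1, ⟨?_, ?_⟩, ?_⟩
  · intro _
    have : 0 ≤ (T u - 1) / T u := div_nonneg (by linarith) (by linarith)
    linarith [hg_nonneg u]
  · intro him
    exfalso
    have h2 : (V u).im = 2 * (sqrtV u).re * (sqrtV u).im := by
      rw [← hsq u hu]; simp [pow_two, Complex.mul_im]; ring
    obtain ⟨ha, hab⟩ := hbranch u hu
    nlinarith
  · -- the integral estimate
    have hlog : Real.log (T u) = ∫ t in u₀..u, f t := by rw [hT, Real.log_exp]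
    have hContRHS : ContinuousOn
        (fun t => 100 * ε ^ 2 * m ^ 2 * ‖V t‖ ^ (-(3 : ℝ) / 2)) (Icc u₀ u) := by
      refine continuousOn_const.mul ?_
      refine ContinuousOn.rpow_const ?_ ?_
      · exact (continuous_norm.comp_continuousOn
          (hVcont.mono (Icc_subset_Icc le_rfl (hu.2.trans h1m))))
      · intro x hx
        exact Or.inl (norm_ne_zero_iff.2 (hVne x ⟨hx.1, hx.2.trans (hu.2.trans h1m)⟩))
    have hInt : MeasureTheory.IntegrableOn
        (fun t => 100 * ε ^ 2 * m ^ 2 * ‖V t‖ ^ (-(3 : ℝ) / 2)) (Ioc u₀ u) := by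
      exact (hContRHS.integrableOn_Icc).mono_set Ioc_subset_Icc_self
    calc Real.log (T u) = ∫ t in u₀..u, f t := hlog
      _ = ∫ t in Ioc u₀ u, f t := intervalIntegral.integral_of_le hu0
      _ ≤ ∫ t in Ioc u₀ u, 100 * ε ^ 2 * m ^ 2 * ‖V t‖ ^ (-(3 : ℝ) / 2) := by
          refine MeasureTheory.integral_mono_of_nonneg
            (Filter.Eventually.of_forall fun t => hf_nonneg t) hInt ?_
          refine (MeasureTheory.ae_restrict_iff' measurableSet_Ioc).2
            (Filter.Eventually.of_forall fun t ht => ?_)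
          exact (key t ⟨ht.1.le, ht.2.trans hu.2⟩).2
      _ = ∫ t in u₀..u, 100 * ε ^ 2 * m ^ 2 * ‖V t‖ ^ (-(3 : ℝ) / 2) :=
          (intervalIntegral.integral_of_le hu0).symm
      _ = 100 * ε ^ 2 * m ^ 2 * ∫ t in u₀..u, ‖V t‖ ^ (-(3 : ℝ) / 2) :=
          intervalIntegral.integral_const_mul _ _
end
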